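/- arXiv:1405.3568 — 5 statements merged into one kernel-verified Lean document; each statement's English description precedes it below -/
import Mathlib

section
/- Let 0 < α ≤ 1 and 2/3 < β < (α+3)/4. Then for each i ∈ {1,2,3}, the integral Bᵢ = ∫_{[−π,π]³} |uᵢ|^α / |u₁u₂u₃(u₁+u₂+u₃)|^β du₁du₂du₃ is finite. -/
open MeasureTheory Real Set
open scoped ENNReal

namespace KernelAux

variable {α' : Type*} [MeasurableSpace α']

lemma lint_ofReal_const_mul {c : ℝ} (hc : 0 ≤ c) (f : α' → ℝ) (μ : Measure α') :
    ∫⁻ z, ENNReal.ofReal (c * f z) ∂μ = ENNReal.ofReal c * ∫⁻ z, ENNReal.ofReal (f z) ∂μ := by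
  simp_rw [ENNReal.ofReal_mul hc]
  exact lintegral_const_mul' _ _ ENNReal.ofReal_ne_top

lemma n1 {r R : ℝ} (hr : -1 < r) (hR : 0 < R) :
    ∫⁻ z in Icc (-R) R, ENNReal.ofReal (|z| ^ r) ≤ ENNReal.ofReal (2 / (r + 1) * R ^ (r + 1)) := by
  have hr1 : (0:ℝ) < r + 1 := by linarith
  have hhalf : ∫⁻ z in Ioc 0 R, ENNReal.ofReal (|z| ^ r)
      = ENNReal.ofReal (R ^ (r + 1) / (r + 1)) := by
    have hcong : ∫⁻ z in Ioc 0 R, ENNReal.ofReal (|z| ^ r)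
        = ∫⁻ z in Ioc 0 R, ENNReal.ofReal (z ^ r) := by
      refine setLIntegral_congr_fun measurableSet_Ioc (fun z hz => ?_)
      rw [abs_of_pos hz.1]
    rw [hcong]
    have hint : IntegrableOn (fun z : ℝ => z ^ r) (Ioc 0 R) := by
      have := intervalIntegral.intervalIntegrable_rpow' (a := 0) (b := R) hr
      rwa [intervalIntegrable_iff, uIoc_of_le hR.le] at this
    rw [← ofReal_integral_eq_lintegral_ofReal hint
      ((ae_restrict_iff' measurableSet_Ioc).mpr (ae_of_all _ fun z hz => Real.rpow_nonneg hz.1.le r))]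
    congr 1
    rw [← intervalIntegral.integral_of_le hR.le, integral_rpow (Or.inl hr),
      Real.zero_rpow (ne_of_gt hr1)]
    ring
  have hneg : ∫⁻ z in Icc (-R) 0, ENNReal.ofReal (|z| ^ r)
      = ∫⁻ z in Icc 0 R, ENNReal.ofReal (|z| ^ r) := by
    have hpre : (Neg.neg : ℝ → ℝ) ⁻¹' Icc 0 R = Icc (-R) 0 := by
      ext z
      simp only [mem_preimage, mem_Icc]
      constructor
      · rintro ⟨h1, h2⟩; constructor <;> linarith
      · rintro ⟨h1, h2⟩; constructor <;> linarith
    calc ∫⁻ z in Icc (-R) 0, ENNReal.ofReal (|z| ^ r)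
        = ∫⁻ z in (Neg.neg : ℝ → ℝ) ⁻¹' Icc 0 R, ENNReal.ofReal (|(-z)| ^ r) := by
          simp only [abs_neg]; rw [hpre]
      _ = ∫⁻ z in Icc 0 R, ENNReal.ofReal (|z| ^ r) :=
          (Measure.measurePreserving_neg (volume : Measure ℝ)).setLIntegral_comp_preimage_emb
            measurableEmbedding_neg (fun w => ENNReal.ofReal (|w| ^ r)) (Icc 0 R)
  have hIcc : ∫⁻ z in Icc 0 R, ENNReal.ofReal (|z| ^ r)
      ≤ ENNReal.ofReal (R ^ (r + 1) / (r + 1)) := by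
    have hsub : Icc (0:ℝ) R ⊆ Ioc 0 R ∪ {0} := fun z hz => by
      rcases eq_or_lt_of_le hz.1 with h | h
      · exact Or.inr (by simp [← h])
      · exact Or.inl ⟨h, hz.2⟩
    calc ∫⁻ z in Icc 0 R, ENNReal.ofReal (|z| ^ r)
        ≤ ∫⁻ z in Ioc 0 R ∪ {0}, ENNReal.ofReal (|z| ^ r) := lintegral_mono_set hsub
      _ ≤ (∫⁻ z in Ioc 0 R, ENNReal.ofReal (|z| ^ r))
          + ∫⁻ z in {0}, ENNReal.ofReal (|z| ^ r) := lintegral_union_le _ _ _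
      _ = ENNReal.ofReal (R ^ (r + 1) / (r + 1)) := by
          rw [hhalf, setLIntegral_measure_zero _ _ (measure_singleton 0), add_zero]
  have hsub : Icc (-R) R ⊆ Icc (-R) 0 ∪ Icc 0 R := fun z hz => by
    rcases le_total z 0 with h | h
    · exact Or.inl ⟨hz.1, h⟩
    · exact Or.inr ⟨h, hz.2⟩
  calc ∫⁻ z in Icc (-R) R, ENNReal.ofReal (|z| ^ r)
      ≤ ∫⁻ z in Icc (-R) 0 ∪ Icc 0 R, ENNReal.ofReal (|z| ^ r) := lintegral_mono_set hsub
    _ ≤ (∫⁻ z in Icc (-R) 0, ENNReal.ofReal (|z| ^ r))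
        + ∫⁻ z in Icc 0 R, ENNReal.ofReal (|z| ^ r) := lintegral_union_le _ _ _
    _ ≤ ENNReal.ofReal (R ^ (r + 1) / (r + 1)) + ENNReal.ofReal (R ^ (r + 1) / (r + 1)) := by
        rw [hneg]; exact add_le_add hIcc hIcc
    _ = ENNReal.ofReal (2 / (r + 1) * R ^ (r + 1)) := by
        rw [← ENNReal.ofReal_add (div_nonneg (Real.rpow_nonneg hR.le _) hr1.le)
          (div_nonneg (Real.rpow_nonneg hR.le _) hr1.le)]
        congr 1
        ring

lemma n2 {s R : ℝ} (hs : 1 < s) (hR : 0 < R) :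
    ∫⁻ z in {z : ℝ | R ≤ |z|}, ENNReal.ofReal (|z| ^ (-s))
      ≤ ENNReal.ofReal (2 / (s - 1) * R ^ (1 - s)) := by
  have hs1 : (0:ℝ) < s - 1 := by linarith
  have key : ∫⁻ z in Ioi R, ENNReal.ofReal (|z| ^ (-s))
      = ENNReal.ofReal (R ^ (1 - s) / (s - 1)) := by
    have hcong : ∫⁻ z in Ioi R, ENNReal.ofReal (|z| ^ (-s))
        = ∫⁻ z in Ioi R, ENNReal.ofReal (z ^ (-s)) := by
      refine setLIntegral_congr_fun measurableSet_Ioi (fun z hz => ?_)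
      rw [abs_of_pos (hR.trans hz)]
    rw [hcong]
    rw [← ofReal_integral_eq_lintegral_ofReal (integrableOn_Ioi_rpow_of_lt (by linarith) hR)
      ((ae_restrict_iff' measurableSet_Ioi).mpr
        (ae_of_all _ fun z hz => Real.rpow_nonneg (hR.le.trans hz.le) _))]
    rw [integral_Ioi_rpow_of_lt (by linarith) hR]
    congr 1
    rw [show (-s + 1 : ℝ) = 1 - s by ring]
    have h1 : (1 - s : ℝ) ≠ 0 := by linarith
    have h2 : (s - 1 : ℝ) ≠ 0 := by linarith
    field_simp
    ring
  have hneg : ∫⁻ z in (Neg.neg : ℝ → ℝ) ⁻¹' Ici R, ENNReal.ofReal (|z| ^ (-s))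
      = ∫⁻ z in Ici R, ENNReal.ofReal (|z| ^ (-s)) := by
    calc ∫⁻ z in (Neg.neg : ℝ → ℝ) ⁻¹' Ici R, ENNReal.ofReal (|z| ^ (-s))
        = ∫⁻ z in (Neg.neg : ℝ → ℝ) ⁻¹' Ici R, ENNReal.ofReal (|(-z)| ^ (-s)) := by
          simp only [abs_neg]
      _ = ∫⁻ z in Ici R, ENNReal.ofReal (|z| ^ (-s)) :=
          (Measure.measurePreserving_neg (volume : Measure ℝ)).setLIntegral_comp_preimage_emb
            measurableEmbedding_neg (fun w => ENNReal.ofReal (|w| ^ (-s))) (Ici R)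
  have hIci : ∫⁻ z in Ici R, ENNReal.ofReal (|z| ^ (-s))
      ≤ ENNReal.ofReal (R ^ (1 - s) / (s - 1)) := by
    have hsub : Ici R ⊆ Ioi R ∪ {R} := fun z hz => by
      rcases eq_or_lt_of_le (mem_Ici.mp hz) with h | h
      · exact Or.inr (by simp [← h])
      · exact Or.inl h
    calc ∫⁻ z in Ici R, ENNReal.ofReal (|z| ^ (-s))
        ≤ ∫⁻ z in Ioi R ∪ {R}, ENNReal.ofReal (|z| ^ (-s)) := lintegral_mono_set hsub
      _ ≤ (∫⁻ z in Ioi R, ENNReal.ofReal (|z| ^ (-s)))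
          + ∫⁻ z in {R}, ENNReal.ofReal (|z| ^ (-s)) := lintegral_union_le _ _ _
      _ = ENNReal.ofReal (R ^ (1 - s) / (s - 1)) := by
          rw [key, setLIntegral_measure_zero _ _ (measure_singleton R), add_zero]
  have hsub : {z : ℝ | R ≤ |z|} ⊆ (Neg.neg : ℝ → ℝ) ⁻¹' Ici R ∪ Ici R := fun z hz => by
    rcases le_abs.mp (show R ≤ |z| from hz) with h | h
    · exact Or.inr h
    · exact Or.inl h
  calc ∫⁻ z in {z : ℝ | R ≤ |z|}, ENNReal.ofReal (|z| ^ (-s))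
      ≤ ∫⁻ z in (Neg.neg : ℝ → ℝ) ⁻¹' Ici R ∪ Ici R, ENNReal.ofReal (|z| ^ (-s)) :=
        lintegral_mono_set hsub
    _ ≤ (∫⁻ z in (Neg.neg : ℝ → ℝ) ⁻¹' Ici R, ENNReal.ofReal (|z| ^ (-s)))
        + ∫⁻ z in Ici R, ENNReal.ofReal (|z| ^ (-s)) := lintegral_union_le _ _ _
    _ ≤ ENNReal.ofReal (R ^ (1 - s) / (s - 1)) + ENNReal.ofReal (R ^ (1 - s) / (s - 1)) := by
        rw [hneg]; exact add_le_add hIci hIci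
    _ = ENNReal.ofReal (2 / (s - 1) * R ^ (1 - s)) := by
        rw [← ENNReal.ofReal_add (div_nonneg (Real.rpow_nonneg hR.le _) hs1.le)
          (div_nonneg (Real.rpow_nonneg hR.le _) hs1.le)]
        congr 1
        ring

noncomputable def Kc (a b : ℝ) : ℝ := (2 / (1 - a) + 2 / (1 - b) + 8 / (a + b - 1)) * 2

lemma Kc_nonneg {a b : ℝ} (ha1 : a < 1) (hb1 : b < 1) (hab : 1 < a + b) : 0 ≤ Kc a b := by
  have h1 : (0:ℝ) ≤ 2 / (1 - a) := div_nonneg (by norm_num) (by linarith)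
  have h2 : (0:ℝ) ≤ 2 / (1 - b) := div_nonneg (by norm_num) (by linarith)
  have h3 : (0:ℝ) ≤ 8 / (a + b - 1) := div_nonneg (by norm_num) (by linarith)
  unfold Kc; linarith


lemma convA {a b c : ℝ} (ha0 : 0 < a) (ha1 : a < 1) (hb0 : 0 < b) (hb1 : b < 1)
    (hab : 1 < a + b) (hc : c ≠ 0) :
    ∫⁻ z : ℝ, ENNReal.ofReal (|z| ^ (-a) * |z + c| ^ (-b))
      ≤ ENNReal.ofReal (Kc a b * |c| ^ (1 - a - b)) := by
  have hcpos : 0 < |c| := abs_pos.mpr hc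
  have mf : Measurable (fun z : ℝ => ENNReal.ofReal (|z| ^ (-a) * |z + c| ^ (-b))) := by fun_prop
  set f : ℝ → ℝ≥0∞ := fun z => ENNReal.ofReal (|z| ^ (-a) * |z + c| ^ (-b)) with hfdef
  set h : ℝ := |c| / 2 with hh
  have hhpos : 0 < h := by rw [hh]; positivity
  have hc2h : |c| = 2 * h := by rw [hh]; ring
  set A : Set ℝ := Icc (-h) h with hA
  set B : Set ℝ := (fun z => z + c) ⁻¹' Icc (-h) h with hB
  set C : Set ℝ := {z : ℝ | h ≤ |z|} ∩ {z : ℝ | h ≤ |z + c|} with hC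
  have mA : MeasurableSet A := measurableSet_Icc
  have mB : MeasurableSet B := measurableSet_Icc.preimage (measurable_id.add_const c)
  have mC : MeasurableSet C :=
    (measurableSet_le measurable_const (measurable_abs)).inter
      (measurableSet_le measurable_const ((measurable_id.add_const c).abs))
  have hcover : ∀ z, f z ≤ A.indicator f z + B.indicator f z + C.indicator f z := by
    intro z
    by_cases hzA : z ∈ A
    · rw [Set.indicator_of_mem hzA]
      exact le_add_of_le_of_nonneg (le_add_of_le_of_nonneg le_rfl zero_le) zero_le
    · by_cases hzB : z ∈ B
      · rw [Set.indicator_of_notMem hzA, Set.indicator_of_mem hzB, zero_add]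
        exact le_add_of_le_of_nonneg le_rfl zero_le
      · have hz1 : h ≤ |z| := by
          have hlt : ¬ |z| ≤ h := fun hle => hzA (mem_Icc.mpr (abs_le.mp hle))
          exact (not_le.mp hlt).le
        have hz2 : h ≤ |z + c| := by
          have hlt : ¬ |z + c| ≤ h := fun hle => hzB (mem_Icc.mpr (abs_le.mp hle))
          exact (not_le.mp hlt).le
        have hzC : z ∈ C := ⟨hz1, hz2⟩
        rw [Set.indicator_of_mem hzC]
        exact le_add_of_nonneg_left zero_le
  have hsplit : ∫⁻ z, f z ≤ (∫⁻ z in A, f z) + (∫⁻ z in B, f z) + (∫⁻ z in C, f z) := by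
    calc ∫⁻ z, f z ≤ ∫⁻ z, (A.indicator f z + B.indicator f z + C.indicator f z) :=
          lintegral_mono hcover
      _ = (∫⁻ z, A.indicator f z) + (∫⁻ z, B.indicator f z) + (∫⁻ z, C.indicator f z) := by
          rw [lintegral_add_left (f := fun z => A.indicator f z + B.indicator f z)
              ((mf.indicator mA).add (mf.indicator mB)),
            lintegral_add_left (mf.indicator mA)]
      _ = (∫⁻ z in A, f z) + (∫⁻ z in B, f z) + (∫⁻ z in C, f z) := by
          rw [lintegral_indicator mA, lintegral_indicator mB, lintegral_indicator mC]
  have boundA : ∫⁻ z in A, f z ≤ ENNReal.ofReal (2 / (1 - a) * h ^ (1 - a - b)) := by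
    have hpt : ∀ z ∈ A, f z ≤ ENNReal.ofReal (h ^ (-b) * |z| ^ (-a)) := by
      intro z hz
      have hzle : |z| ≤ h := abs_le.mpr (mem_Icc.mp hz)
      have hge : h ≤ |z + c| := by
        have habs : |c| - |z| ≤ |z + c| := by
          have h1 := abs_sub_abs_le_abs_sub c (-z)
          rw [abs_neg, sub_neg_eq_add, add_comm c z] at h1
          linarith
        linarith
      rw [hfdef]
      refine ENNReal.ofReal_le_ofReal ?_
      rw [mul_comm (h ^ (-b))]
      exact mul_le_mul_of_nonneg_left
        (Real.rpow_le_rpow_of_nonpos hhpos hge (by linarith)) (Real.rpow_nonneg (abs_nonneg z) _)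
    calc ∫⁻ z in A, f z ≤ ∫⁻ z in A, ENNReal.ofReal (h ^ (-b) * |z| ^ (-a)) :=
          setLIntegral_mono (by fun_prop) hpt
      _ = ENNReal.ofReal (h ^ (-b)) * ∫⁻ z in A, ENNReal.ofReal (|z| ^ (-a)) :=
          lint_ofReal_const_mul (Real.rpow_nonneg hhpos.le _) _ _
      _ ≤ ENNReal.ofReal (h ^ (-b)) * ENNReal.ofReal (2 / (-a + 1) * h ^ (-a + 1)) := by
          rw [hA]
          exact mul_le_mul_right (n1 (by linarith) hhpos) _
      _ = ENNReal.ofReal (h ^ (-b) * (2 / (-a + 1) * h ^ (-a + 1))) :=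
          (ENNReal.ofReal_mul (Real.rpow_nonneg hhpos.le _)).symm
      _ = ENNReal.ofReal (2 / (1 - a) * h ^ (1 - a - b)) := by
          congr 1
          rw [show h ^ (-b) * (2 / (-a + 1) * h ^ (-a + 1))
              = 2 / (-a + 1) * (h ^ (-b) * h ^ (-a + 1)) by ring,
            ← Real.rpow_add hhpos, show -b + (-a + 1) = 1 - a - b by ring,
            show (-a + 1 : ℝ) = 1 - a by ring]
  have boundB : ∫⁻ z in B, f z ≤ ENNReal.ofReal (2 / (1 - b) * h ^ (1 - a - b)) := by
    have hpt : ∀ z ∈ B, f z ≤ ENNReal.ofReal (h ^ (-a) * |z + c| ^ (-b)) := by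
      intro z hz
      have hzle : |z + c| ≤ h := abs_le.mpr (mem_Icc.mp hz)
      have hge : h ≤ |z| := by
        have habs : |c| - |z + c| ≤ |z| := by
          have h1 := abs_sub_abs_le_abs_sub c (z + c)
          rw [show c - (z + c) = -z by ring, abs_neg] at h1
          linarith
        linarith
      rw [hfdef]
      refine ENNReal.ofReal_le_ofReal ?_
      exact mul_le_mul_of_nonneg_right
        (Real.rpow_le_rpow_of_nonpos hhpos hge (by linarith))
        (Real.rpow_nonneg (abs_nonneg _) _)
    calc ∫⁻ z in B, f z ≤ ∫⁻ z in B, ENNReal.ofReal (h ^ (-a) * |z + c| ^ (-b)) :=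
          setLIntegral_mono (by fun_prop) hpt
      _ = ENNReal.ofReal (h ^ (-a)) * ∫⁻ z in B, ENNReal.ofReal (|z + c| ^ (-b)) :=
          lint_ofReal_const_mul (Real.rpow_nonneg hhpos.le _) _ _
      _ = ENNReal.ofReal (h ^ (-a)) * ∫⁻ w in Icc (-h) h, ENNReal.ofReal (|w| ^ (-b)) := by
          congr 1
          rw [hB]
          exact (measurePreserving_add_right volume c).setLIntegral_comp_preimage_emb
            (measurableEmbedding_addRight c) (fun w => ENNReal.ofReal (|w| ^ (-b))) (Icc (-h) h)
      _ ≤ ENNReal.ofReal (h ^ (-a)) * ENNReal.ofReal (2 / (-b + 1) * h ^ (-b + 1)) :=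
          mul_le_mul_right (n1 (by linarith) hhpos) _
      _ = ENNReal.ofReal (h ^ (-a) * (2 / (-b + 1) * h ^ (-b + 1))) :=
          (ENNReal.ofReal_mul (Real.rpow_nonneg hhpos.le _)).symm
      _ = ENNReal.ofReal (2 / (1 - b) * h ^ (1 - a - b)) := by
          congr 1
          rw [show h ^ (-a) * (2 / (-b + 1) * h ^ (-b + 1))
              = 2 / (-b + 1) * (h ^ (-a) * h ^ (-b + 1)) by ring,
            ← Real.rpow_add hhpos, show -a + (-b + 1) = 1 - a - b by ring,
            show (-b + 1 : ℝ) = 1 - b by ring]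
  have boundC : ∫⁻ z in C, f z ≤ ENNReal.ofReal (8 / (a + b - 1) * h ^ (1 - a - b)) := by
    have hpt : ∀ z ∈ C, f z ≤ ENNReal.ofReal (4 * |z| ^ (-(a + b))) := by
      rintro z ⟨hz1, hz2⟩
      have hz1' : h ≤ |z| := hz1
      have hz2' : h ≤ |z + c| := hz2
      have hzpos : 0 < |z| := lt_of_lt_of_le hhpos hz1'
      have hq : |z| / 4 ≤ |z + c| := by
        rcases le_or_gt |z| (2 * |c|) with hle | hlt
        · calc |z| / 4 ≤ 2 * |c| / 4 := by linarith
            _ = h := by rw [hh]; ring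
            _ ≤ |z + c| := hz2'
        · have habs : |z| - |c| ≤ |z + c| := by
            have h1 := abs_sub_abs_le_abs_sub z (-c)
            rw [abs_neg, sub_neg_eq_add] at h1
            linarith
          linarith
      have h4 : |z + c| ^ (-b) ≤ 4 * |z| ^ (-b) := by
        have h1 : |z + c| ^ (-b) ≤ (|z| / 4) ^ (-b) :=
          Real.rpow_le_rpow_of_nonpos (by positivity) hq (by linarith)
        have h2 : (|z| / 4 : ℝ) ^ (-b) = |z| ^ (-b) * 4 ^ b := by
          rw [Real.div_rpow (abs_nonneg z) (by norm_num : (0:ℝ) ≤ 4), div_eq_mul_inv,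
            ← Real.rpow_neg (by norm_num : (0:ℝ) ≤ 4), neg_neg]
        have h3 : (4:ℝ) ^ b ≤ 4 := by
          calc (4:ℝ) ^ b ≤ 4 ^ (1:ℝ) := Real.rpow_le_rpow_of_exponent_le (by norm_num) hb1.le
            _ = 4 := Real.rpow_one 4
        calc |z + c| ^ (-b) ≤ |z| ^ (-b) * 4 ^ b := h2 ▸ h1
          _ ≤ |z| ^ (-b) * 4 := mul_le_mul_of_nonneg_left h3 (Real.rpow_nonneg (abs_nonneg z) _)
          _ = 4 * |z| ^ (-b) := mul_comm _ _
      rw [hfdef]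
      refine ENNReal.ofReal_le_ofReal ?_
      calc |z| ^ (-a) * |z + c| ^ (-b) ≤ |z| ^ (-a) * (4 * |z| ^ (-b)) :=
            mul_le_mul_of_nonneg_left h4 (Real.rpow_nonneg (abs_nonneg z) _)
        _ = 4 * (|z| ^ (-a) * |z| ^ (-b)) := by ring
        _ = 4 * |z| ^ (-(a + b)) := by
            rw [← Real.rpow_add hzpos, show -a + -b = -(a + b) by ring]
    calc ∫⁻ z in C, f z ≤ ∫⁻ z in C, ENNReal.ofReal (4 * |z| ^ (-(a + b))) :=
          setLIntegral_mono (by fun_prop) hpt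
      _ ≤ ∫⁻ z in {z : ℝ | h ≤ |z|}, ENNReal.ofReal (4 * |z| ^ (-(a + b))) :=
          lintegral_mono_set (fun z hz => hz.1)
      _ = ENNReal.ofReal 4 * ∫⁻ z in {z : ℝ | h ≤ |z|}, ENNReal.ofReal (|z| ^ (-(a + b))) :=
          lint_ofReal_const_mul (by norm_num) _ _
      _ ≤ ENNReal.ofReal 4 * ENNReal.ofReal (2 / (a + b - 1) * h ^ (1 - (a + b))) :=
          mul_le_mul_right (n2 hab hhpos) _
      _ = ENNReal.ofReal (8 / (a + b - 1) * h ^ (1 - a - b)) := by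
          rw [← ENNReal.ofReal_mul (by norm_num : (0:ℝ) ≤ 4)]
          congr 1
          rw [show (1 - (a + b) : ℝ) = 1 - a - b by ring]
          ring
  refine hsplit.trans ?_
  have hfin : ENNReal.ofReal (2 / (1 - a) * h ^ (1 - a - b))
      + ENNReal.ofReal (2 / (1 - b) * h ^ (1 - a - b))
      + ENNReal.ofReal (8 / (a + b - 1) * h ^ (1 - a - b))
      ≤ ENNReal.ofReal (Kc a b * |c| ^ (1 - a - b)) := by
    have hn1 : (0:ℝ) ≤ 2 / (1 - a) * h ^ (1 - a - b) :=
      mul_nonneg (div_nonneg (by norm_num) (by linarith)) (Real.rpow_nonneg hhpos.le _)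
    have hn2 : (0:ℝ) ≤ 2 / (1 - b) * h ^ (1 - a - b) :=
      mul_nonneg (div_nonneg (by norm_num) (by linarith)) (Real.rpow_nonneg hhpos.le _)
    have hn3 : (0:ℝ) ≤ 8 / (a + b - 1) * h ^ (1 - a - b) :=
      mul_nonneg (div_nonneg (by norm_num) (by linarith)) (Real.rpow_nonneg hhpos.le _)
    rw [← ENNReal.ofReal_add hn1 hn2, ← ENNReal.ofReal_add (by linarith) hn3]
    refine ENNReal.ofReal_le_ofReal ?_
    have hht : h ^ (1 - a - b) ≤ 2 * |c| ^ (1 - a - b) := by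
      rw [hh, Real.div_rpow (abs_nonneg c) (by norm_num : (0:ℝ) ≤ 2), div_eq_mul_inv,
        ← Real.rpow_neg (by norm_num : (0:ℝ) ≤ 2)]
      have h2 : (2:ℝ) ^ (-(1 - a - b)) ≤ 2 := by
        calc (2:ℝ) ^ (-(1 - a - b)) ≤ 2 ^ (1:ℝ) :=
              Real.rpow_le_rpow_of_exponent_le one_le_two (by linarith)
          _ = 2 := Real.rpow_one 2
      calc |c| ^ (1 - a - b) * 2 ^ (-(1 - a - b)) ≤ |c| ^ (1 - a - b) * 2 :=
            mul_le_mul_of_nonneg_left h2 (Real.rpow_nonneg (abs_nonneg c) _)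
        _ = 2 * |c| ^ (1 - a - b) := mul_comm _ _
    have hcoef : (0:ℝ) ≤ 2 / (1 - a) + 2 / (1 - b) + 8 / (a + b - 1) := by
      have h1 : (0:ℝ) ≤ 2 / (1 - a) := div_nonneg (by norm_num) (by linarith)
      have h2 : (0:ℝ) ≤ 2 / (1 - b) := div_nonneg (by norm_num) (by linarith)
      have h3 : (0:ℝ) ≤ 8 / (a + b - 1) := div_nonneg (by norm_num) (by linarith)
      linarith
    calc 2 / (1 - a) * h ^ (1 - a - b) + 2 / (1 - b) * h ^ (1 - a - b)
          + 8 / (a + b - 1) * h ^ (1 - a - b)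
        = (2 / (1 - a) + 2 / (1 - b) + 8 / (a + b - 1)) * h ^ (1 - a - b) := by ring
      _ ≤ (2 / (1 - a) + 2 / (1 - b) + 8 / (a + b - 1)) * (2 * |c| ^ (1 - a - b)) :=
          mul_le_mul_of_nonneg_left hht hcoef
      _ = Kc a b * |c| ^ (1 - a - b) := by rw [Kc]; ring
  exact add_le_add (add_le_add boundA boundB) boundC |>.trans hfin

lemma ae_ne (c : ℝ) : ∀ᵐ x : ℝ, x ≠ c := by
  refine ae_iff.mpr ?_
  simp only [not_not, Set.setOf_eq_eq_singleton]
  exact measure_singleton c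

lemma convG {β : ℝ} (hβl : 2 / 3 < β) (hβ1 : β < 1) {c : ℝ} (hc : c ≠ 0) :
    ∫⁻ y in Icc (-π) π, ∫⁻ z in Icc (-π) π,
        ENNReal.ofReal (|y| ^ (-β) * (|z| ^ (-β) * |c + y + z| ^ (-β)))
      ≤ ENNReal.ofReal (Kc β β * Kc β (2 * β - 1) * |c| ^ (2 - 3 * β)) := by
  have hβ0 : 0 < β := by linarith
  have hKnn : 0 ≤ Kc β β := Kc_nonneg hβ1 hβ1 (by linarith)
  have key : ∀ᵐ y ∂(volume.restrict (Icc (-π) π)),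
      (∫⁻ z in Icc (-π) π, ENNReal.ofReal (|y| ^ (-β) * (|z| ^ (-β) * |c + y + z| ^ (-β))))
        ≤ ENNReal.ofReal (Kc β β)
          * ENNReal.ofReal (|y| ^ (-β) * |y + c| ^ (-(2 * β - 1))) := by
    filter_upwards [ae_restrict_of_ae (ae_ne (-c))] with y hy
    have hyc : y + c ≠ 0 := fun hcon => hy (by linarith)
    calc ∫⁻ z in Icc (-π) π, ENNReal.ofReal (|y| ^ (-β) * (|z| ^ (-β) * |c + y + z| ^ (-β)))
        = ENNReal.ofReal (|y| ^ (-β))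
          * ∫⁻ z in Icc (-π) π, ENNReal.ofReal (|z| ^ (-β) * |c + y + z| ^ (-β)) :=
          lint_ofReal_const_mul (Real.rpow_nonneg (abs_nonneg y) _) _ _
      _ ≤ ENNReal.ofReal (|y| ^ (-β)) * ENNReal.ofReal (Kc β β * |y + c| ^ (1 - β - β)) := by
          refine mul_le_mul_right ?_ _
          calc ∫⁻ z in Icc (-π) π, ENNReal.ofReal (|z| ^ (-β) * |c + y + z| ^ (-β))
              ≤ ∫⁻ z : ℝ, ENNReal.ofReal (|z| ^ (-β) * |c + y + z| ^ (-β)) :=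
                setLIntegral_le_lintegral _ _
            _ = ∫⁻ z : ℝ, ENNReal.ofReal (|z| ^ (-β) * |z + (y + c)| ^ (-β)) :=
                lintegral_congr fun z => by rw [show c + y + z = z + (y + c) by ring]
            _ ≤ ENNReal.ofReal (Kc β β * |y + c| ^ (1 - β - β)) :=
                convA hβ0 hβ1 hβ0 hβ1 (by linarith) hyc
      _ = ENNReal.ofReal (Kc β β)
          * ENNReal.ofReal (|y| ^ (-β) * |y + c| ^ (-(2 * β - 1))) := by
          rw [show (1 - β - β : ℝ) = -(2 * β - 1) by ring,
            ← ENNReal.ofReal_mul (Real.rpow_nonneg (abs_nonneg y) _),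
            show |y| ^ (-β) * (Kc β β * |y + c| ^ (-(2 * β - 1)))
              = Kc β β * (|y| ^ (-β) * |y + c| ^ (-(2 * β - 1))) by ring,
            ENNReal.ofReal_mul hKnn]
  calc ∫⁻ y in Icc (-π) π, ∫⁻ z in Icc (-π) π,
        ENNReal.ofReal (|y| ^ (-β) * (|z| ^ (-β) * |c + y + z| ^ (-β)))
      ≤ ∫⁻ y in Icc (-π) π, ENNReal.ofReal (Kc β β)
          * ENNReal.ofReal (|y| ^ (-β) * |y + c| ^ (-(2 * β - 1))) := lintegral_mono_ae key
    _ = ENNReal.ofReal (Kc β β)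
        * ∫⁻ y in Icc (-π) π, ENNReal.ofReal (|y| ^ (-β) * |y + c| ^ (-(2 * β - 1))) :=
        lintegral_const_mul' _ _ ENNReal.ofReal_ne_top
    _ ≤ ENNReal.ofReal (Kc β β)
        * ENNReal.ofReal (Kc β (2 * β - 1) * |c| ^ (1 - β - (2 * β - 1))) := by
        refine mul_le_mul_right ?_ _
        exact (setLIntegral_le_lintegral _ _).trans
          (convA hβ0 hβ1 (by linarith) (by linarith) (by linarith) hc)
    _ = ENNReal.ofReal (Kc β β * Kc β (2 * β - 1) * |c| ^ (2 - 3 * β)) := by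
        rw [show (1 - β - (2 * β - 1) : ℝ) = 2 - 3 * β by ring, ← ENNReal.ofReal_mul hKnn,
          mul_assoc]

lemma mainlem {α β : ℝ} (hα0 : 0 < α) (hα1 : α ≤ 1) (hβl : 2 / 3 < β)
    (hβu : β < (α + 3) / 4) :
    ∫⁻ x in Icc (-π) π, ∫⁻ y in Icc (-π) π, ∫⁻ z in Icc (-π) π,
        ENNReal.ofReal (|x| ^ α * |x| ^ (-β)
          * (|y| ^ (-β) * (|z| ^ (-β) * |x + y + z| ^ (-β)))) < ⊤ := by
  have hβ1 : β < 1 := by linarith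
  have hβ0 : 0 < β := by linarith
  have he : (-1:ℝ) < α - 4 * β + 2 := by linarith
  have hK12 : 0 ≤ Kc β β * Kc β (2 * β - 1) :=
    mul_nonneg (Kc_nonneg hβ1 hβ1 (by linarith)) (Kc_nonneg hβ1 (by linarith) (by linarith))
  have hpull : ∀ x : ℝ,
      (∫⁻ y in Icc (-π) π, ∫⁻ z in Icc (-π) π,
        ENNReal.ofReal (|x| ^ α * |x| ^ (-β)
          * (|y| ^ (-β) * (|z| ^ (-β) * |x + y + z| ^ (-β)))))
      = ENNReal.ofReal (|x| ^ α * |x| ^ (-β))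
        * ∫⁻ y in Icc (-π) π, ∫⁻ z in Icc (-π) π,
            ENNReal.ofReal (|y| ^ (-β) * (|z| ^ (-β) * |x + y + z| ^ (-β))) := by
    intro x
    have hnn : 0 ≤ |x| ^ α * |x| ^ (-β) :=
      mul_nonneg (Real.rpow_nonneg (abs_nonneg x) _) (Real.rpow_nonneg (abs_nonneg x) _)
    calc (∫⁻ y in Icc (-π) π, ∫⁻ z in Icc (-π) π,
          ENNReal.ofReal (|x| ^ α * |x| ^ (-β)
            * (|y| ^ (-β) * (|z| ^ (-β) * |x + y + z| ^ (-β)))))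
        = ∫⁻ y in Icc (-π) π, ENNReal.ofReal (|x| ^ α * |x| ^ (-β))
            * ∫⁻ z in Icc (-π) π,
              ENNReal.ofReal (|y| ^ (-β) * (|z| ^ (-β) * |x + y + z| ^ (-β))) :=
          lintegral_congr fun y => lint_ofReal_const_mul hnn _ _
      _ = ENNReal.ofReal (|x| ^ α * |x| ^ (-β))
          * ∫⁻ y in Icc (-π) π, ∫⁻ z in Icc (-π) π,
              ENNReal.ofReal (|y| ^ (-β) * (|z| ^ (-β) * |x + y + z| ^ (-β))) :=
          lintegral_const_mul' _ _ ENNReal.ofReal_ne_top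
  rw [lintegral_congr hpull]
  have key : ∀ᵐ x ∂(volume.restrict (Icc (-π) π)),
      ENNReal.ofReal (|x| ^ α * |x| ^ (-β))
        * (∫⁻ y in Icc (-π) π, ∫⁻ z in Icc (-π) π,
            ENNReal.ofReal (|y| ^ (-β) * (|z| ^ (-β) * |x + y + z| ^ (-β))))
        ≤ ENNReal.ofReal (Kc β β * Kc β (2 * β - 1))
          * ENNReal.ofReal (|x| ^ (α - 4 * β + 2)) := by
    filter_upwards [ae_restrict_of_ae (ae_ne (0:ℝ))] with x hx
    have habs : 0 < |x| := abs_pos.mpr hx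
    have hnn : 0 ≤ |x| ^ α * |x| ^ (-β) :=
      mul_nonneg (Real.rpow_nonneg (abs_nonneg x) _) (Real.rpow_nonneg (abs_nonneg x) _)
    have hexp : |x| ^ α * |x| ^ (-β) * |x| ^ (2 - 3 * β) = |x| ^ (α - 4 * β + 2) := by
      rw [← Real.rpow_add habs, ← Real.rpow_add habs]
      congr 1
      ring
    calc ENNReal.ofReal (|x| ^ α * |x| ^ (-β))
          * (∫⁻ y in Icc (-π) π, ∫⁻ z in Icc (-π) π,
              ENNReal.ofReal (|y| ^ (-β) * (|z| ^ (-β) * |x + y + z| ^ (-β))))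
        ≤ ENNReal.ofReal (|x| ^ α * |x| ^ (-β))
          * ENNReal.ofReal (Kc β β * Kc β (2 * β - 1) * |x| ^ (2 - 3 * β)) :=
          mul_le_mul_right (convG hβl hβ1 hx) _
      _ = ENNReal.ofReal (Kc β β * Kc β (2 * β - 1))
          * ENNReal.ofReal (|x| ^ (α - 4 * β + 2)) := by
          rw [← ENNReal.ofReal_mul hnn,
            show |x| ^ α * |x| ^ (-β) * (Kc β β * Kc β (2 * β - 1) * |x| ^ (2 - 3 * β))
              = Kc β β * Kc β (2 * β - 1) * (|x| ^ α * |x| ^ (-β) * |x| ^ (2 - 3 * β)) by ring,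
            hexp, ENNReal.ofReal_mul hK12]
  calc ∫⁻ x in Icc (-π) π, ENNReal.ofReal (|x| ^ α * |x| ^ (-β))
        * ∫⁻ y in Icc (-π) π, ∫⁻ z in Icc (-π) π,
            ENNReal.ofReal (|y| ^ (-β) * (|z| ^ (-β) * |x + y + z| ^ (-β)))
      ≤ ∫⁻ x in Icc (-π) π, ENNReal.ofReal (Kc β β * Kc β (2 * β - 1))
          * ENNReal.ofReal (|x| ^ (α - 4 * β + 2)) := lintegral_mono_ae key
    _ = ENNReal.ofReal (Kc β β * Kc β (2 * β - 1))
        * ∫⁻ x in Icc (-π) π, ENNReal.ofReal (|x| ^ (α - 4 * β + 2)) :=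
        lintegral_const_mul' _ _ ENNReal.ofReal_ne_top
    _ ≤ ENNReal.ofReal (Kc β β * Kc β (2 * β - 1))
        * ENNReal.ofReal (2 / (α - 4 * β + 2 + 1) * π ^ (α - 4 * β + 2 + 1)) :=
        mul_le_mul_right (n1 he Real.pi_pos) _
    _ < ⊤ := by
        exact ENNReal.mul_lt_top ENNReal.ofReal_lt_top ENNReal.ofReal_lt_top

lemma integrand_eq (α β x y z : ℝ) :
    |x| ^ α / |x * y * z * (x + y + z)| ^ β
      = |x| ^ α * |x| ^ (-β) * (|y| ^ (-β) * (|z| ^ (-β) * |x + y + z| ^ (-β))) := by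
  rw [abs_mul, abs_mul, abs_mul,
    Real.mul_rpow (mul_nonneg (mul_nonneg (abs_nonneg x) (abs_nonneg y)) (abs_nonneg z))
      (abs_nonneg _),
    Real.mul_rpow (mul_nonneg (abs_nonneg x) (abs_nonneg y)) (abs_nonneg z),
    Real.mul_rpow (abs_nonneg x) (abs_nonneg y),
    Real.rpow_neg (abs_nonneg x), Real.rpow_neg (abs_nonneg y), Real.rpow_neg (abs_nonneg z),
    Real.rpow_neg (abs_nonneg (x + y + z)), div_eq_mul_inv]
  ring

lemma tonelli (f : ℝ × ℝ × ℝ → ℝ≥0∞) (hf : Measurable f) (S : Set ℝ) :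
    ∫⁻ u in S ×ˢ S ×ˢ S, f u = ∫⁻ x in S, ∫⁻ y in S, ∫⁻ z in S, f (x, y, z) := by
  have h1 : (volume : Measure (ℝ × ℝ × ℝ))
      = (volume : Measure ℝ).prod ((volume : Measure ℝ).prod (volume : Measure ℝ)) := rfl
  rw [h1, ← Measure.prod_restrict, ← Measure.prod_restrict,
    lintegral_prod _ hf.aemeasurable]
  refine lintegral_congr fun x => ?_
  exact lintegral_prod (fun y => f (x, y)) ((hf.comp measurable_prodMk_left).aemeasurable)

end KernelAux

open KernelAux
theorem kernel_integral_finite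
    (α β : ℝ) (hα0 : 0 < α) (hα1 : α ≤ 1) (hβl : 2 / 3 < β) (hβu : β < (α + 3) / 4)
    (i : Fin 3) :
    (∫⁻ u in (Set.Icc (-Real.pi) Real.pi ×ˢ Set.Icc (-Real.pi) Real.pi ×ˢ
        Set.Icc (-Real.pi) Real.pi : Set (ℝ × ℝ × ℝ)),
      ENNReal.ofReal (|![u.1, u.2.1, u.2.2] i| ^ α /
        |u.1 * u.2.1 * u.2.2 * (u.1 + u.2.1 + u.2.2)| ^ β)) < ⊤ := by
  fin_cases i
  · simp only [Fin.zero_eta, Fin.isValue, Matrix.cons_val_zero]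
    have heq : ∀ u : ℝ × ℝ × ℝ,
        ENNReal.ofReal (|u.1| ^ α / |u.1 * u.2.1 * u.2.2 * (u.1 + u.2.1 + u.2.2)| ^ β)
          = ENNReal.ofReal (|u.1| ^ α * |u.1| ^ (-β)
              * (|u.2.1| ^ (-β) * (|u.2.2| ^ (-β) * |u.1 + u.2.1 + u.2.2| ^ (-β)))) := by
      intro u; rw [integrand_eq]
    rw [lintegral_congr heq, tonelli _ (by fun_prop) _]
    exact mainlem hα0 hα1 hβl hβu
  · simp only [Fin.mk_one, Fin.isValue, Matrix.cons_val_one, Matrix.head_cons, Matrix.cons_val_zero]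
    have heq : ∀ u : ℝ × ℝ × ℝ,
        ENNReal.ofReal (|u.2.1| ^ α / |u.1 * u.2.1 * u.2.2 * (u.1 + u.2.1 + u.2.2)| ^ β)
          = ENNReal.ofReal (|u.2.1| ^ α * |u.2.1| ^ (-β)
              * (|u.1| ^ (-β) * (|u.2.2| ^ (-β) * |u.2.1 + u.1 + u.2.2| ^ (-β)))) := by
      intro u
      rw [show u.1 * u.2.1 * u.2.2 * (u.1 + u.2.1 + u.2.2)
          = u.2.1 * u.1 * u.2.2 * (u.2.1 + u.1 + u.2.2) by ring, integrand_eq]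
    rw [lintegral_congr heq, tonelli _ (by fun_prop) _]
    have hm : Measurable (Function.uncurry fun x y : ℝ =>
        ∫⁻ z in Set.Icc (-Real.pi) Real.pi,
          ENNReal.ofReal (|y| ^ α * |y| ^ (-β)
            * (|x| ^ (-β) * (|z| ^ (-β) * |y + x + z| ^ (-β))))) := by
      exact Measurable.lintegral_prod_right (f := fun (p : ℝ × ℝ) (z : ℝ) =>
        ENNReal.ofReal (|p.2| ^ α * |p.2| ^ (-β)
          * (|p.1| ^ (-β) * (|z| ^ (-β) * |p.2 + p.1 + z| ^ (-β))))) (by fun_prop)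
    rw [lintegral_lintegral_swap hm.aemeasurable]
    exact mainlem hα0 hα1 hβl hβu
  · simp only [Fin.reduceFinMk, Fin.isValue, Matrix.cons_val_two, Matrix.tail_cons, Matrix.head_cons]
    have heq : ∀ u : ℝ × ℝ × ℝ,
        ENNReal.ofReal (|u.2.2| ^ α / |u.1 * u.2.1 * u.2.2 * (u.1 + u.2.1 + u.2.2)| ^ β)
          = ENNReal.ofReal (|u.2.2| ^ α * |u.2.2| ^ (-β)
              * (|u.1| ^ (-β) * (|u.2.1| ^ (-β) * |u.2.2 + u.1 + u.2.1| ^ (-β)))) := by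
      intro u
      rw [show u.1 * u.2.1 * u.2.2 * (u.1 + u.2.1 + u.2.2)
          = u.2.2 * u.1 * u.2.1 * (u.2.2 + u.1 + u.2.1) by ring, integrand_eq]
    rw [lintegral_congr heq, tonelli _ (by fun_prop) _]
    have hinner : ∀ x : ℝ,
        (∫⁻ y in Set.Icc (-Real.pi) Real.pi, ∫⁻ z in Set.Icc (-Real.pi) Real.pi,
          ENNReal.ofReal (|z| ^ α * |z| ^ (-β)
            * (|x| ^ (-β) * (|y| ^ (-β) * |z + x + y| ^ (-β)))))
        = ∫⁻ z in Set.Icc (-Real.pi) Real.pi, ∫⁻ y in Set.Icc (-Real.pi) Real.pi,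
          ENNReal.ofReal (|z| ^ α * |z| ^ (-β)
            * (|x| ^ (-β) * (|y| ^ (-β) * |z + x + y| ^ (-β)))) := by
      intro x
      exact lintegral_lintegral_swap (by fun_prop)
    rw [lintegral_congr hinner]
    have hm : Measurable (Function.uncurry fun x z : ℝ =>
        ∫⁻ y in Set.Icc (-Real.pi) Real.pi,
          ENNReal.ofReal (|z| ^ α * |z| ^ (-β)
            * (|x| ^ (-β) * (|y| ^ (-β) * |z + x + y| ^ (-β))))) := by
      exact Measurable.lintegral_prod_right (f := fun (p : ℝ × ℝ) (y : ℝ) =>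
        ENNReal.ofReal (|p.2| ^ α * |p.2| ^ (-β)
          * (|p.1| ^ (-β) * (|y| ^ (-β) * |p.2 + p.1 + y| ^ (-β))))) (by fun_prop)
    rw [lintegral_lintegral_swap hm.aemeasurable]
    exact mainlem hα0 hα1 hβl hβu
end

section
/- Let p > 1 and 0 < α < 1 with αp < 1, and let f be a 2π-periodic real-valued function that is differentiable at every λ ∈ [−π,π]\{0} and satisfies, for some constants M₁, M₂ > 0, |f(λ)| ≤ M₁|λ|^{−α} and |f′(λ)| ≤ M₂|λ|^{−(α+1)} for all λ ∈ [−π,π]\{0}. Then f ∈ Lip(p, 1/p − α); that is, there is a constant C such that ω_p(f,δ) ≤ C·δ^{1/p−α} for all δ > 0. -/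
open MeasureTheory Real
open scoped ENNReal

/-- The `L^p` modulus of continuity
`ω_p(ψ,δ) = sup_{0 < h ≤ δ} ‖ψ(·+h) - ψ(·)‖_{L^p(-π,π)}`. -/
noncomputable def modulusLp (p : ℝ≥0∞) (ψ : ℝ → ℝ) (δ : ℝ) : ℝ≥0∞ :=
  ⨆ h ∈ Set.Ioc (0 : ℝ) δ,
    eLpNorm (fun x => ψ (x + h) - ψ x) p (volume.restrict (Set.Ioc (-Real.pi) Real.pi))

/-- `ψ ∈ Lip(p,γ)`: `ψ ∈ L^p(-π,π)` and `ω_p(ψ,δ) ≤ C δ^γ` for all `δ > 0`. -/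
def MemLip (p : ℝ≥0∞) (γ : ℝ) (ψ : ℝ → ℝ) : Prop :=
  MemLp ψ p (volume.restrict (Set.Ioc (-Real.pi) Real.pi)) ∧
  ∃ C : ℝ, ∀ δ : ℝ, 0 < δ → modulusLp p ψ δ ≤ ENNReal.ofReal (C * δ ^ γ)

section Helpers

lemma H1 {r : ℝ} (hr : -1 < r) {b : ℝ} (hb : 0 < b) :
    ∫⁻ x in Set.Ioc (0:ℝ) b, ENNReal.ofReal (x ^ r) = ENNReal.ofReal (b ^ (r+1) / (r+1)) := by
  have hint : IntervalIntegrable (fun x : ℝ => x ^ r) volume 0 b :=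
    intervalIntegral.intervalIntegrable_rpow' hr
  have hint' : IntegrableOn (fun x : ℝ => x ^ r) (Set.Ioc 0 b) volume :=
    (intervalIntegrable_iff_integrableOn_Ioc_of_le hb.le).1 hint
  have hnn : 0 ≤ᶠ[ae (volume.restrict (Set.Ioc (0:ℝ) b))] fun x : ℝ => x ^ r := by
    refine (ae_restrict_iff' measurableSet_Ioc).2 (Filter.Eventually.of_forall fun x hx => ?_)
    exact Real.rpow_nonneg hx.1.le r
  rw [← MeasureTheory.ofReal_integral_eq_lintegral_ofReal hint' hnn]
  congr 1
  rw [← intervalIntegral.integral_of_le hb.le, integral_rpow (Or.inl hr),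
    Real.zero_rpow (by linarith), sub_zero]

lemma H2 {s : ℝ} (hs : 1 < s) {a : ℝ} (b : ℝ) (ha : 0 < a) :
    ∫⁻ x in Set.Ioc a b, ENNReal.ofReal (x ^ (-s)) ≤ ENNReal.ofReal (a ^ (1-s) / (s-1)) := by
  rcases le_or_gt b a with hba | hab
  · rw [Set.Ioc_eq_empty (by exact fun h => absurd hba (not_le.2 h)), Measure.restrict_empty,
      lintegral_zero_measure]
    exact zero_le
  · have h0 : (0:ℝ) ∉ Set.uIcc a b := by
      rw [Set.uIcc_of_le (le_of_lt hab)]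
      exact fun h => absurd h.1 (not_le.2 ha)
    have hint : IntervalIntegrable (fun x : ℝ => x ^ (-s)) volume a b :=
      intervalIntegral.intervalIntegrable_rpow (Or.inr h0)
    have hint' : IntegrableOn (fun x : ℝ => x ^ (-s)) (Set.Ioc a b) volume :=
      (intervalIntegrable_iff_integrableOn_Ioc_of_le hab.le).1 hint
    have hnn : 0 ≤ᶠ[ae (volume.restrict (Set.Ioc a b))] fun x : ℝ => x ^ (-s) := by
      refine (ae_restrict_iff' measurableSet_Ioc).2 (Filter.Eventually.of_forall fun x hx => ?_)
      exact Real.rpow_nonneg (le_of_lt (lt_trans ha hx.1)) _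
    rw [← MeasureTheory.ofReal_integral_eq_lintegral_ofReal hint' hnn]
    apply ENNReal.ofReal_le_ofReal
    rw [← intervalIntegral.integral_of_le hab.le,
      integral_rpow (Or.inr ⟨fun h => absurd (neg_inj.1 h) (by linarith), h0⟩)]
    have hb0 : (0:ℝ) < b := lt_trans ha hab
    have e1 : -s + 1 = 1 - s := by ring
    rw [e1]
    have h1 : 0 ≤ b ^ (1-s) := Real.rpow_nonneg hb0.le _
    have e2 : (b ^ (1-s) - a ^ (1-s)) / (1-s) = (a ^ (1-s) - b ^ (1-s))/(s-1) := by
      rw [div_eq_div_iff (by linarith) (by linarith)]; ring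
    rw [e2]
    have hs1 : (0:ℝ) < s - 1 := by linarith
    exact (div_le_div_iff_of_pos_right hs1).2 (by linarith)

lemma H3 {r : ℝ} (a b : ℝ) :
    ∫⁻ x in Set.Ioc (-b) (-a), ENNReal.ofReal (|x| ^ r)
      = ∫⁻ x in Set.Ioc a b, ENNReal.ofReal (|x| ^ r) := by
  have hmp : MeasurePreserving (Neg.neg : ℝ → ℝ) volume volume :=
    Measure.measurePreserving_neg volume
  have := hmp.setLIntegral_comp_preimage_emb measurableEmbedding_neg
    (fun y => ENNReal.ofReal (|y| ^ r)) (Set.Ioc a b)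
  have hpre : (Neg.neg : ℝ → ℝ) ⁻¹' Set.Ioc a b = Set.Ico (-b) (-a) := by
    ext x
    simp only [Set.mem_preimage, Set.mem_Ioc, Set.mem_Ico]
    constructor <;> (intro h; constructor <;> linarith [h.1, h.2])
  rw [hpre] at this
  simp only [abs_neg] at this
  rw [← this]
  exact (setLIntegral_congr (MeasureTheory.Ico_ae_eq_Ioc)).symm

lemma H1abs {r : ℝ} (hr : -1 < r) {b : ℝ} (hb : 0 < b) :
    ∫⁻ x in Set.Ioc (0:ℝ) b, ENNReal.ofReal (|x| ^ r) = ENNReal.ofReal (b ^ (r+1) / (r+1)) := by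
  rw [setLIntegral_congr_fun measurableSet_Ioc
    (fun x hx => by rw [abs_of_pos hx.1])]
  exact H1 hr hb

lemma H2abs {s : ℝ} (hs : 1 < s) {a : ℝ} (b : ℝ) (ha : 0 < a) :
    ∫⁻ x in Set.Ioc a b, ENNReal.ofReal (|x| ^ (-s)) ≤ ENNReal.ofReal (a ^ (1-s) / (s-1)) := by
  rw [setLIntegral_congr_fun measurableSet_Ioc
    (fun x hx => by rw [abs_of_pos (lt_trans ha hx.1)])]
  exact H2 hs b ha

lemma Hsym {r : ℝ} (hr : -1 < r) {b : ℝ} (hb : 0 < b) :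
    ∫⁻ x in Set.Ioc (-b) b, ENNReal.ofReal (|x| ^ r)
      ≤ ENNReal.ofReal (2 * (b ^ (r+1) / (r+1))) := by
  have hsplit : Set.Ioc (-b) b = Set.Ioc (-b) 0 ∪ Set.Ioc (0:ℝ) b :=
    (Set.Ioc_union_Ioc_eq_Ioc (by linarith) hb.le).symm
  rw [hsplit]
  refine le_trans (lintegral_union_le _ _ _) ?_
  have h1 : ∫⁻ x in Set.Ioc (-b) (0:ℝ), ENNReal.ofReal (|x| ^ r)
      = ENNReal.ofReal (b ^ (r+1) / (r+1)) := by
    have := H3 (r := r) 0 b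
    rw [neg_zero] at this
    rw [this]
    exact H1abs hr hb
  have hnn : 0 ≤ b ^ (r+1) / (r+1) := div_nonneg (Real.rpow_nonneg hb.le _) (by linarith)
  rw [h1, H1abs hr hb, ← ENNReal.ofReal_add hnn hnn]
  exact ENNReal.ofReal_le_ofReal (by linarith)

lemma Htail {s : ℝ} (hs : 1 < s) {a : ℝ} (b : ℝ) (ha : 0 < a) :
    ∫⁻ x in Set.Ioc (-b) b \ Set.Ioc (-a) a, ENNReal.ofReal (|x| ^ (-s))
      ≤ ENNReal.ofReal (2 * (a ^ (1-s) / (s-1))) := by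
  have hsub : Set.Ioc (-b) b \ Set.Ioc (-a) a ⊆ Set.Ioc (-b) (-a) ∪ Set.Ioc a b := by
    intro x hx
    rcases hx with ⟨⟨hx1, hx2⟩, hx3⟩
    simp only [Set.mem_Ioc, not_and, not_le] at hx3
    rcases le_or_gt x (-a) with h | h
    · exact Or.inl ⟨hx1, h⟩
    · exact Or.inr ⟨hx3 h, hx2⟩
  refine le_trans (lintegral_mono_set hsub) ?_
  refine le_trans (lintegral_union_le _ _ _) ?_
  have h1 : ∫⁻ x in Set.Ioc (-b) (-a), ENNReal.ofReal (|x| ^ (-s))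
      ≤ ENNReal.ofReal (a ^ (1-s) / (s-1)) := by
    rw [H3 a b]; exact H2abs hs b ha
  have h2 := H2abs hs b ha
  calc _ ≤ ENNReal.ofReal (a ^ (1-s) / (s-1)) + ENNReal.ofReal (a ^ (1-s) / (s-1)) :=
        add_le_add h1 h2
    _ ≤ _ := by
        have hnn : 0 ≤ a ^ (1-s) / (s-1) := div_nonneg (Real.rpow_nonneg ha.le _) (by linarith)
        rw [← ENNReal.ofReal_add hnn hnn]
        exact ENNReal.ofReal_le_ofReal (by linarith)

lemma Hper (g : ℝ → ℝ≥0∞) (T : ℝ) (hT : 0 < T) (hg : ∀ x, g (x + T) = g x) (t s : ℝ) :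
    ∫⁻ x in Set.Ioc t (t + T), g x = ∫⁻ x in Set.Ioc s (s + T), g x := by
  haveI : Fact (0 < T) := ⟨hT⟩
  have hper : Function.Periodic g T := hg
  have h1 := AddCircle.lintegral_preimage T t hper.lift
  have h2 := AddCircle.lintegral_preimage T s hper.lift
  simp only [Function.Periodic.lift_coe] at h1 h2
  rw [h1, h2]

lemma Hshift (g : ℝ → ℝ≥0∞) (h : ℝ) (a b : ℝ) :
    ∫⁻ x in Set.Ioc a b, g (x + h) = ∫⁻ x in Set.Ioc (a + h) (b + h), g x := by
  have hmp : MeasurePreserving (fun x : ℝ => x + h) volume volume :=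
    measurePreserving_add_right volume h
  have := hmp.setLIntegral_comp_preimage_emb (MeasurableEquiv.addRight h).measurableEmbedding
    g (Set.Ioc (a+h) (b+h))
  rw [Set.preimage_add_const_Ioc] at this
  simpa using this

lemma Hpow {y R q : ℝ} (hq : 0 ≤ q) (hR : |y| ≤ R) :
    ((‖y‖₊ : ℝ≥0∞)) ^ q ≤ ENNReal.ofReal (R ^ q) := by
  rw [← enorm_eq_nnnorm, Real.enorm_eq_ofReal_abs, ENNReal.ofReal_rpow_of_nonneg (abs_nonneg y) hq]
  exact ENNReal.ofReal_le_ofReal (Real.rpow_le_rpow (abs_nonneg y) hR hq)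

end Helpers
set_option maxHeartbeats 2000000 in
theorem lipschitz_of_power_bounds
    (p α : ℝ) (hp : 1 < p) (hα0 : 0 < α) (hα1 : α < 1) (hαp : α * p < 1)
    (f : ℝ → ℝ) (hper : Function.Periodic f (2 * Real.pi))
    (hdiff : ∀ x ∈ Set.Icc (-Real.pi) Real.pi, x ≠ 0 → DifferentiableAt ℝ f x)
    (M₁ M₂ : ℝ) (hM₁ : 0 < M₁) (hM₂ : 0 < M₂)
    (hb : ∀ x ∈ Set.Icc (-Real.pi) Real.pi, x ≠ 0 → |f x| ≤ M₁ * |x| ^ (-α))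
    (hd : ∀ x ∈ Set.Icc (-Real.pi) Real.pi, x ≠ 0 → |deriv f x| ≤ M₂ * |x| ^ (-(α + 1))) :
    MemLip (ENNReal.ofReal p) (1 / p - α) f := by
  have hπ : (0:ℝ) < Real.pi := Real.pi_pos
  have hp0 : (0:ℝ) < p := by linarith
  set S : Set ℝ := Set.Ioc (-Real.pi) Real.pi with hSdef
  set γ : ℝ := 1/p - α with hγdef
  have hγ : 0 < γ := by
    have hα' : α < 1/p := by rw [lt_div_iff₀ hp0]; linarith
    simp only [hγdef]; linarith
  set e : ℝ := 1 - α*p with hedef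
  have he : 0 < e := by simp only [hedef]; linarith
  have hap : 0 < α * p := mul_pos hα0 hp0
  set s' : ℝ := (α+1)*p with hs'def
  have hs' : 1 < s' := by simp only [hs'def]; nlinarith
  set P := ENNReal.ofReal p with hPdef
  have hP0 : P ≠ 0 := (ENNReal.ofReal_pos.2 hp0).ne'
  have hPtop : P ≠ ⊤ := ENNReal.ofReal_ne_top
  have hPto : P.toReal = p := ENNReal.toReal_ofReal hp0.le
  have hP1 : 1 ≤ P := by rw [hPdef]; exact ENNReal.one_le_ofReal.2 hp.le
  have hnorm_eq : ∀ g : ℝ → ℝ, eLpNorm g P (volume.restrict S)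
      = (∫⁻ x in S, ((‖g x‖₊ : ℝ≥0∞)) ^ p) ^ (1/p) := fun g => by
    rw [MeasureTheory.eLpNorm_eq_lintegral_rpow_enorm_toReal hP0 hPtop, hPto]; rfl
  -- continuity away from multiples of 2π
  have hcontAt : ∀ x : ℝ, (∀ k : ℤ, x ≠ k * (2*Real.pi)) → ContinuousAt f x := by
    intro x hx
    have h2π : (0:ℝ) < 2*Real.pi := by linarith
    set k : ℤ := ⌊(x+Real.pi)/(2*Real.pi)⌋ with hkdef
    have h1 : (k:ℝ) ≤ (x+Real.pi)/(2*Real.pi) := Int.floor_le _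
    have h2 : (x+Real.pi)/(2*Real.pi) < k + 1 := Int.lt_floor_add_one _
    have h1' : (k:ℝ)*(2*Real.pi) ≤ x + Real.pi := by
      rw [le_div_iff₀ h2π] at h1; exact h1
    have h2' : x + Real.pi < ((k:ℝ)+1)*(2*Real.pi) := by
      rw [div_lt_iff₀ h2π] at h2; exact h2
    have hy1 : -Real.pi ≤ x - k*(2*Real.pi) := by linarith
    have hy2 : x - k*(2*Real.pi) < Real.pi := by nlinarith
    have hy0 : x - k*(2*Real.pi) ≠ 0 := fun h0 => hx k (by linarith [sub_eq_zero.1 h0])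
    have hdy : DifferentiableAt ℝ f (x - k*(2*Real.pi)) := hdiff _ ⟨hy1, hy2.le⟩ hy0
    have hyf : f = fun t => f (t - k*(2*Real.pi)) :=
      funext fun t => (hper.sub_int_mul_eq k).symm
    rw [hyf]
    have hinner : ContinuousAt (fun t : ℝ => t - k*(2*Real.pi)) x :=
      (continuous_sub_right _).continuousAt
    exact ContinuousAt.comp (g := f) (f := fun t : ℝ => t - (k:ℝ)*(2*Real.pi)) hdy.continuousAt hinner
  -- a.e. strong measurability
  have hmeas : AEStronglyMeasurable f (volume : Measure ℝ) := by
    set E : Set ℝ := Set.range (fun k : ℤ => (k:ℝ)*(2*Real.pi)) with hEdef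
    have hEc : E.Countable := Set.countable_range _
    have hEm : MeasurableSet Eᶜ := hEc.measurableSet.compl
    have hcf : ContinuousOn f Eᶜ := fun x hx =>
      (hcontAt x (fun k hk => hx ⟨k, hk.symm⟩)).continuousWithinAt
    have h1 : AEStronglyMeasurable f (volume.restrict Eᶜ) := hcf.aestronglyMeasurable hEm
    have h2 : (Eᶜ : Set ℝ) =ᵐ[volume] (Set.univ : Set ℝ) := by
      rw [MeasureTheory.ae_eq_univ, compl_compl]
      exact hEc.measure_zero _
    rwa [Measure.restrict_congr_set h2, Measure.restrict_univ] at h1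
  have hmeas_sh : ∀ h : ℝ, AEStronglyMeasurable (fun x => f (x + h)) (volume : Measure ℝ) := by
    intro h
    have := hmeas.comp_measurePreserving (measurePreserving_add_right volume h)
    exact this
  -- periodic extension of differentiability and derivative bounds
  have hfeq : f = fun t => f (t - 2*Real.pi) := funext fun t => (hper.sub_eq t).symm
  have hD1 : ∀ t : ℝ, -Real.pi ≤ t → t ≤ 3*Real.pi/2 → t ≠ 0 → DifferentiableAt ℝ f t := by
    intro t h1 h2 h0
    rcases le_or_gt t Real.pi with h3 | h3
    · exact hdiff t ⟨h1, h3⟩ h0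
    · have hmem : t - 2*Real.pi ∈ Set.Icc (-Real.pi) Real.pi := ⟨by linarith, by linarith⟩
      have hne : t - 2*Real.pi ≠ 0 := by intro hc; nlinarith [sub_eq_zero.1 hc]
      have hdt : DifferentiableAt ℝ f (t - 2*Real.pi) := hdiff _ hmem hne
      rw [hfeq]
      have hinner : DifferentiableAt ℝ (fun u : ℝ => u - 2*Real.pi) t :=
        differentiableAt_id.sub_const _
      exact DifferentiableAt.comp (g := f) (f := fun u : ℝ => u - 2*Real.pi) t hdt hinner
  have hderiv_sh : ∀ t : ℝ, deriv f t = deriv f (t - 2*Real.pi) := by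
    intro t
    have key := deriv_comp_sub_const f (2*Real.pi) t
    have hfe : (fun x : ℝ => f (x - 2*Real.pi)) = f := funext fun u => hper.sub_eq u
    rw [hfe] at key
    exact key
  have hD3 : ∀ t : ℝ, Real.pi < t → t ≤ 3*Real.pi/2 →
      |deriv f t| ≤ M₂ * (Real.pi/2) ^ (-(α+1)) := by
    intro t h1 h2
    rw [hderiv_sh t]
    have hmem : t - 2*Real.pi ∈ Set.Icc (-Real.pi) Real.pi := ⟨by linarith, by linarith⟩
    have hne : t - 2*Real.pi ≠ 0 := by intro hc; nlinarith [sub_eq_zero.1 hc]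
    refine le_trans (hd _ hmem hne) ?_
    have habs : Real.pi/2 ≤ |t - 2*Real.pi| := by
      rw [abs_of_neg (by linarith)]; linarith
    have hmono := Real.rpow_le_rpow_of_nonpos (by linarith : (0:ℝ) < Real.pi/2) habs
      (by linarith : -(α+1) ≤ 0)
    exact mul_le_mul_of_nonneg_left hmono hM₂.le
  -- bound for the lintegral of f itself
  have h0ae : ∀ᵐ x : ℝ ∂volume, x ≠ 0 := by
    have : volume ({0} : Set ℝ) = 0 := measure_singleton 0
    exact compl_mem_ae_iff.2 this
  have Ibound : ∫⁻ x in S, ((‖f x‖₊ : ℝ≥0∞)) ^ p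
      ≤ ENNReal.ofReal (M₁^p * (2 * (Real.pi ^ e / e))) := by
    have hae : ∀ᵐ x ∂(volume.restrict S),
        ((‖f x‖₊ : ℝ≥0∞)) ^ p ≤ ENNReal.ofReal (M₁^p) * ENNReal.ofReal (|x| ^ (-(α*p))) := by
      rw [hSdef]
      refine (ae_restrict_iff' measurableSet_Ioc).2 ?_
      filter_upwards [h0ae] with x hx0 hxS
      have hxmem : x ∈ Set.Icc (-Real.pi) Real.pi := ⟨hxS.1.le, hxS.2⟩
      have hfb := hb x hxmem hx0
      refine le_trans (Hpow hp0.le hfb) ?_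
      rw [Real.mul_rpow hM₁.le (Real.rpow_nonneg (abs_nonneg x) _),
        ← ENNReal.ofReal_mul (Real.rpow_nonneg hM₁.le _)]
      apply le_of_eq
      congr 2
      rw [← Real.rpow_mul (abs_nonneg x), neg_mul]
    calc ∫⁻ x in S, ((‖f x‖₊ : ℝ≥0∞)) ^ p
        ≤ ∫⁻ x in S, ENNReal.ofReal (M₁^p) * ENNReal.ofReal (|x| ^ (-(α*p))) :=
          lintegral_mono_ae hae
      _ = ENNReal.ofReal (M₁^p) * ∫⁻ x in S, ENNReal.ofReal (|x| ^ (-(α*p))) :=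
          lintegral_const_mul' _ _ ENNReal.ofReal_ne_top
      _ ≤ ENNReal.ofReal (M₁^p)
          * ENNReal.ofReal (2 * (Real.pi ^ (-(α*p)+1) / (-(α*p)+1))) := by
          rw [hSdef]
          exact mul_le_mul_right (Hsym (by linarith) hπ) _
      _ ≤ ENNReal.ofReal (M₁^p * (2 * (Real.pi ^ e / e))) := by
          rw [← ENNReal.ofReal_mul (Real.rpow_nonneg hM₁.le _)]
          have hee : 2 * (Real.pi ^ (-(α*p)+1) / (-(α*p)+1)) = 2 * (Real.pi ^ e / e) := by
            rw [show -(α*p)+1 = e from by rw [hedef]; ring]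
          rw [hee]
  set Bv : ℝ := M₁^p * (2 * (Real.pi ^ e / e)) with hBvdef
  have hBv : 0 ≤ Bv := by
    have := Real.rpow_nonneg hπ.le e
    have := Real.rpow_nonneg hM₁.le p
    positivity
  set B₀ : ℝ := Bv ^ (1/p) with hB₀def
  have hB₀ : 0 ≤ B₀ := Real.rpow_nonneg hBv _
  have hfnorm : eLpNorm f P (volume.restrict S) ≤ ENNReal.ofReal B₀ := by
    rw [hnorm_eq]
    calc (∫⁻ x in S, ((‖f x‖₊ : ℝ≥0∞)) ^ p) ^ (1/p)
        ≤ (ENNReal.ofReal Bv) ^ (1/p) := ENNReal.rpow_le_rpow Ibound (by positivity)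
      _ = ENNReal.ofReal B₀ := ENNReal.ofReal_rpow_of_nonneg hBv (by positivity)
  -- translation invariance of the norm
  have hgper : ∀ x : ℝ, ((‖f (x + 2*Real.pi)‖₊ : ℝ≥0∞)) ^ p = ((‖f x‖₊ : ℝ≥0∞)) ^ p := by
    intro x; rw [hper x]
  have hshiftnorm : ∀ h : ℝ,
      eLpNorm (fun x => f (x + h)) P (volume.restrict S) = eLpNorm f P (volume.restrict S) := by
    intro h
    rw [hnorm_eq, hnorm_eq]
    congr 1
    have h1 : ∫⁻ x in Set.Ioc (-Real.pi) Real.pi, ((‖f (x+h)‖₊ : ℝ≥0∞)) ^ p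
        = ∫⁻ x in Set.Ioc (-Real.pi + h) (Real.pi + h), ((‖f x‖₊ : ℝ≥0∞)) ^ p :=
      Hshift (fun y => ((‖f y‖₊ : ℝ≥0∞)) ^ p) h (-Real.pi) Real.pi
    have h2 := Hper (fun y => ((‖f y‖₊ : ℝ≥0∞)) ^ p) (2*Real.pi) (by linarith) hgper
      (-Real.pi + h) (-Real.pi)
    rw [show -Real.pi + h + 2*Real.pi = Real.pi + h from by ring,
      show -Real.pi + 2*Real.pi = Real.pi from by ring] at h2
    rw [hSdef]
    exact h1.trans h2
  have huniform : ∀ h : ℝ,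
      eLpNorm (fun x => f (x + h) - f x) P (volume.restrict S) ≤ ENNReal.ofReal (2*B₀) := by
    intro h
    have h1 : (fun x => f (x+h) - f x) = (fun x => f (x+h)) - f := rfl
    rw [h1]
    refine le_trans (eLpNorm_sub_le ((hmeas_sh h).restrict) hmeas.restrict hP1) ?_
    rw [hshiftnorm h]
    refine le_trans (add_le_add hfnorm hfnorm) ?_
    rw [← ENNReal.ofReal_add hB₀ hB₀]
    exact ENNReal.ofReal_le_ofReal (by linarith)
  -- the core estimate
  set K : ℝ := M₂ * 2 ^ (α+1) with hKdef
  have h2pow : (0:ℝ) < 2 ^ (α+1) := Real.rpow_pos_of_pos (by norm_num) _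
  have hK : 0 < K := mul_pos hM₂ h2pow
  set CN : ℝ := (2*M₁)^p * (2 * (2^e * 1 / e) + 2 * (3^e * 1 / e)) with hCNdef
  set CF : ℝ := K^p * (2 * (2^(1-s') / (s'-1))) with hCFdef
  have hCN : 0 ≤ CN := by
    have h2e := Real.rpow_nonneg (by norm_num : (0:ℝ) ≤ 2) e
    have h3e := Real.rpow_nonneg (by norm_num : (0:ℝ) ≤ 3) e
    have h2M := Real.rpow_nonneg (by linarith : (0:ℝ) ≤ 2*M₁) p
    positivity
  have hCF : 0 ≤ CF := by
    have h2s := Real.rpow_nonneg (by norm_num : (0:ℝ) ≤ 2) (1-s')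
    have hKp := Real.rpow_nonneg hK.le p
    have hdv : 0 ≤ 2^(1-s')/(s'-1) := div_nonneg h2s (by linarith)
    exact mul_nonneg hKp (by linarith)
  set C₁ : ℝ := (CN + CF) ^ (1/p) with hC₁def
  have hC₁ : 0 ≤ C₁ := Real.rpow_nonneg (by linarith) _
  have hcore : ∀ h : ℝ, 0 < h → h ≤ Real.pi/3 →
      eLpNorm (fun x => f (x + h) - f x) P (volume.restrict S)
        ≤ ENNReal.ofReal (C₁ * h ^ γ) := by
    intro h hh hh3
    set N : Set ℝ := Set.Ioc (-(2*h)) (2*h) with hNdef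
    have hrE : (-1:ℝ) < -(α*p) := by linarith
    -- near pointwise bound
    have hnear_ae : ∀ᵐ x ∂(volume.restrict N),
        ((‖f (x+h) - f x‖₊ : ℝ≥0∞)) ^ p
          ≤ ENNReal.ofReal ((2*M₁)^p)
            * (ENNReal.ofReal (|x| ^ (-(α*p))) + ENNReal.ofReal (|x+h| ^ (-(α*p)))) := by
      have hhne : ∀ᵐ x : ℝ ∂volume, x ≠ -h := compl_mem_ae_iff.2 (measure_singleton _)
      rw [hNdef]
      refine (ae_restrict_iff' measurableSet_Ioc).2 ?_
      filter_upwards [h0ae, hhne] with x hx0 hxh hxN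
      have hmem1 : x ∈ Set.Icc (-Real.pi) Real.pi :=
        ⟨by nlinarith [hxN.1], by nlinarith [hxN.2]⟩
      have hmem2 : x + h ∈ Set.Icc (-Real.pi) Real.pi :=
        ⟨by nlinarith [hxN.1], by nlinarith [hxN.2]⟩
      have hfb1 := hb x hmem1 hx0
      have hfb2 := hb (x+h) hmem2 (fun hc => hxh (by linarith))
      have ha0 : 0 ≤ |x| ^ (-α) := Real.rpow_nonneg (abs_nonneg x) _
      have hb0 : 0 ≤ |x+h| ^ (-α) := Real.rpow_nonneg (abs_nonneg _) _
      have htri : |f (x+h) - f x| ≤ M₁*(|x+h| ^ (-α)) + M₁*(|x| ^ (-α)) :=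
        le_trans (abs_sub _ _) (add_le_add hfb2 hfb1)
      refine le_trans (Hpow hp0.le htri) ?_
      have hpm1 : (|x| ^ (-α)) ^ p = |x| ^ (-(α*p)) := by
        rw [← Real.rpow_mul (abs_nonneg x), neg_mul]
      have hpm2 : (|x+h| ^ (-α)) ^ p = |x+h| ^ (-(α*p)) := by
        rw [← Real.rpow_mul (abs_nonneg _), neg_mul]
      have hkey : (M₁*(|x+h| ^ (-α)) + M₁*(|x| ^ (-α)))^p
          ≤ (2*M₁)^p * (|x| ^ (-(α*p)) + |x+h| ^ (-(α*p))) := by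
        have h2M0 : (0:ℝ) ≤ (2*M₁)^p := Real.rpow_nonneg (by linarith) _
        rcases le_total (|x| ^ (-α)) (|x+h| ^ (-α)) with hab | hab
        · calc (M₁*(|x+h| ^ (-α)) + M₁*(|x| ^ (-α)))^p
              ≤ ((2*M₁)*(|x+h| ^ (-α)))^p :=
                Real.rpow_le_rpow (by positivity) (by nlinarith) hp0.le
            _ = (2*M₁)^p * (|x+h| ^ (-α))^p := Real.mul_rpow (by linarith) hb0
            _ = (2*M₁)^p * |x+h| ^ (-(α*p)) := by rw [hpm2]
            _ ≤ (2*M₁)^p * (|x| ^ (-(α*p)) + |x+h| ^ (-(α*p))) := by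
                have := Real.rpow_nonneg (abs_nonneg x) (-(α*p))
                nlinarith
        · calc (M₁*(|x+h| ^ (-α)) + M₁*(|x| ^ (-α)))^p
              ≤ ((2*M₁)*(|x| ^ (-α)))^p :=
                Real.rpow_le_rpow (by positivity) (by nlinarith) hp0.le
            _ = (2*M₁)^p * (|x| ^ (-α))^p := Real.mul_rpow (by linarith) ha0
            _ = (2*M₁)^p * |x| ^ (-(α*p)) := by rw [hpm1]
            _ ≤ (2*M₁)^p * (|x| ^ (-(α*p)) + |x+h| ^ (-(α*p))) := by
                have := Real.rpow_nonneg (abs_nonneg (x+h)) (-(α*p))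
                nlinarith
      refine le_trans (ENNReal.ofReal_le_ofReal hkey) ?_
      rw [ENNReal.ofReal_mul (Real.rpow_nonneg (by linarith) _),
        ENNReal.ofReal_add (Real.rpow_nonneg (abs_nonneg x) _)
          (Real.rpow_nonneg (abs_nonneg _) _)]
    -- near integral bound
    have hnear : ∫⁻ x in N, ((‖f (x+h) - f x‖₊ : ℝ≥0∞)) ^ p
        ≤ ENNReal.ofReal (CN * h ^ e) := by
      refine le_trans (lintegral_mono_ae hnear_ae) ?_
      have hmeas1 : Measurable (fun x : ℝ => ENNReal.ofReal (|x| ^ (-(α*p)))) := by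
        apply Measurable.ennreal_ofReal; fun_prop
      rw [lintegral_const_mul' _ _ ENNReal.ofReal_ne_top, lintegral_add_left hmeas1]
      have hI1 : ∫⁻ x in N, ENNReal.ofReal (|x| ^ (-(α*p)))
          ≤ ENNReal.ofReal (2 * ((2*h) ^ (-(α*p)+1) / (-(α*p)+1))) := by
        rw [hNdef]; exact Hsym hrE (by linarith)
      have hI2 : ∫⁻ x in N, ENNReal.ofReal (|x+h| ^ (-(α*p)))
          ≤ ENNReal.ofReal (2 * ((3*h) ^ (-(α*p)+1) / (-(α*p)+1))) := by
        rw [hNdef]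
        have hsh : ∫⁻ x in Set.Ioc (-(2*h)) (2*h), ENNReal.ofReal (|x+h| ^ (-(α*p)))
            = ∫⁻ x in Set.Ioc (-(2*h)+h) (2*h+h), ENNReal.ofReal (|x| ^ (-(α*p))) :=
          Hshift (fun y => ENNReal.ofReal (|y| ^ (-(α*p)))) h _ _
        rw [hsh]
        refine le_trans (lintegral_mono_set ?_)
          (Hsym hrE (by linarith : (0:ℝ) < 3*h))
        apply Set.Ioc_subset_Ioc <;> linarith
      refine le_trans (mul_le_mul_right (add_le_add hI1 hI2) _) ?_
      have hE : -(α*p)+1 = e := by rw [hedef]; ring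
      rw [hE]
      have hnn1 : 0 ≤ 2 * ((2*h) ^ e / e) := by
        have := Real.rpow_nonneg (by linarith : (0:ℝ) ≤ 2*h) e
        positivity
      have hnn2 : 0 ≤ 2 * ((3*h) ^ e / e) := by
        have := Real.rpow_nonneg (by linarith : (0:ℝ) ≤ 3*h) e
        positivity
      rw [← ENNReal.ofReal_add hnn1 hnn2,
        ← ENNReal.ofReal_mul (Real.rpow_nonneg (by linarith) _)]
      apply ENNReal.ofReal_le_ofReal
      have h2he : (2*h)^e = 2^e * h^e := Real.mul_rpow (by norm_num) hh.le
      have h3he : (3*h)^e = 3^e * h^e := Real.mul_rpow (by norm_num) hh.le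
      rw [h2he, h3he, hCNdef]
      apply le_of_eq
      field_simp
    -- far pointwise bound
    have hfar_ae : ∀ᵐ x ∂(volume.restrict (S \ N)),
        ((‖f (x+h) - f x‖₊ : ℝ≥0∞)) ^ p
          ≤ ENNReal.ofReal ((K*h)^p) * ENNReal.ofReal (|x| ^ (-s')) := by
      rw [hSdef, hNdef]
      refine (ae_restrict_iff' (measurableSet_Ioc.diff measurableSet_Ioc)).2
        (Filter.Eventually.of_forall ?_)
      rintro x ⟨hxS, hxN⟩
      have hcase : x ≤ -(2*h) ∨ 2*h < x := by
        rcases le_or_gt x (-(2*h)) with hc | hc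
        · exact Or.inl hc
        · right
          by_contra hc2
          push_neg at hc2
          exact hxN ⟨hc, hc2⟩
      have hx0 : x ≠ 0 := by
        rcases hcase with hc | hc
        · exact ne_of_lt (by linarith)
        · exact ne_of_gt (by linarith)
      have hxabs0 : 0 < |x| := abs_pos.2 hx0
      have hdb : ∀ t ∈ Set.Icc x (x+h), |deriv f t| ≤ K * |x| ^ (-(α+1)) := by
        intro t ht
        obtain ⟨ht1, ht2⟩ := ht
        have hhalf : (|x|/2) ^ (-(α+1)) = 2^(α+1) * |x| ^ (-(α+1)) := by
          rw [Real.div_rpow (abs_nonneg x) (by norm_num : (0:ℝ) ≤ 2),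
            Real.rpow_neg (by norm_num : (0:ℝ) ≤ 2), div_eq_mul_inv, inv_inv, mul_comm]
        rcases hcase with hc | hc
        · have htneg : t < 0 := by linarith
          have htmem : t ∈ Set.Icc (-Real.pi) Real.pi := ⟨by linarith [hxS.1], by linarith⟩
          refine le_trans (hd t htmem (ne_of_lt htneg)) ?_
          have habs2 : |x|/2 ≤ |t| := by
            rw [abs_of_neg htneg, abs_of_nonpos (by linarith : x ≤ 0)]
            linarith
          have hmono := Real.rpow_le_rpow_of_nonpos (by positivity) habs2
            (by linarith : -(α+1) ≤ 0)
          rw [hhalf] at hmono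
          calc M₂ * |t|^(-(α+1)) ≤ M₂ * (2^(α+1) * |x|^(-(α+1))) :=
              mul_le_mul_of_nonneg_left hmono hM₂.le
            _ = K * |x|^(-(α+1)) := by rw [hKdef]; ring
        · have htpos : 0 < t := by linarith
          rcases le_or_gt t Real.pi with hcc | hcc
          · have htmem : t ∈ Set.Icc (-Real.pi) Real.pi := ⟨by linarith, hcc⟩
            refine le_trans (hd t htmem (ne_of_gt htpos)) ?_
            have habs2 : |x| ≤ |t| := by
              rw [abs_of_pos htpos, abs_of_pos (by linarith : (0:ℝ) < x)]
              linarith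
            have hmono := Real.rpow_le_rpow_of_nonpos hxabs0 habs2
              (by linarith : -(α+1) ≤ 0)
            have h2ge1 : (1:ℝ) ≤ 2^(α+1) := by
              calc (1:ℝ) = 2^(0:ℝ) := (Real.rpow_zero 2).symm
                _ ≤ 2^(α+1) := Real.rpow_le_rpow_of_exponent_le (by norm_num) (by linarith)
            have hxp0 : 0 ≤ |x|^(-(α+1)) := Real.rpow_nonneg (abs_nonneg x) _
            calc M₂ * |t|^(-(α+1)) ≤ M₂ * |x|^(-(α+1)) :=
                mul_le_mul_of_nonneg_left hmono hM₂.le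
              _ ≤ K * |x|^(-(α+1)) := by rw [hKdef]; nlinarith [mul_nonneg (sub_nonneg.2 h2ge1) (mul_nonneg hM₂.le hxp0)]
          · refine le_trans (hD3 t hcc (by linarith [hxS.2])) ?_
            have hxleπ : |x| ≤ Real.pi := by
              rw [abs_of_pos (by linarith : (0:ℝ) < x)]
              exact hxS.2
            have hmono := Real.rpow_le_rpow_of_nonpos hxabs0 hxleπ
              (by linarith : -(α+1) ≤ 0)
            have hππ : (Real.pi/2) ^ (-(α+1)) = 2^(α+1) * Real.pi ^ (-(α+1)) := by
              rw [Real.div_rpow Real.pi_pos.le (by norm_num : (0:ℝ) ≤ 2),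
                Real.rpow_neg (by norm_num : (0:ℝ) ≤ 2), div_eq_mul_inv, inv_inv, mul_comm]
            rw [hππ, hKdef]
            calc M₂ * (2^(α+1) * Real.pi^(-(α+1)))
                ≤ M₂ * (2^(α+1) * |x|^(-(α+1))) := by nlinarith
              _ = M₂ * 2^(α+1) * |x|^(-(α+1)) := by ring
      have hD1seg : ∀ t ∈ Set.Icc x (x+h),
          HasDerivWithinAt f (deriv f t) (Set.Icc x (x+h)) t := by
        intro t ht
        have ht0 : t ≠ 0 := by
          rcases hcase with hc | hc
          · exact ne_of_lt (by linarith [ht.2])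
          · exact ne_of_gt (by linarith [ht.1])
        exact ((hD1 t (by linarith [ht.1, hxS.1]) (by linarith [ht.2, hxS.2]) ht0).hasDerivAt).hasDerivWithinAt
      have hmvt := norm_image_sub_le_of_norm_deriv_le_segment' hD1seg
        (fun t ht => by rw [Real.norm_eq_abs]; exact hdb t (Set.Ico_subset_Icc_self ht))
        (x+h) ⟨by linarith, le_refl _⟩
      rw [Real.norm_eq_abs, add_sub_cancel_left] at hmvt
      refine le_trans (Hpow hp0.le hmvt) ?_
      apply le_of_eq
      rw [← ENNReal.ofReal_mul (Real.rpow_nonneg (mul_nonneg hK.le hh.le) _)]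
      congr 1
      rw [show K * |x|^(-(α+1)) * h = (K*h) * |x|^(-(α+1)) from by ring,
        Real.mul_rpow (mul_nonneg hK.le hh.le) (Real.rpow_nonneg (abs_nonneg x) _),
        ← Real.rpow_mul (abs_nonneg x), show -(α+1)*p = -s' from by rw [hs'def]; ring]
    -- far integral bound
    have hfar : ∫⁻ x in S \ N, ((‖f (x+h) - f x‖₊ : ℝ≥0∞)) ^ p
        ≤ ENNReal.ofReal (CF * h ^ e) := by
      refine le_trans (lintegral_mono_ae hfar_ae) ?_
      rw [lintegral_const_mul' _ _ ENNReal.ofReal_ne_top]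
      have htail : ∫⁻ x in S \ N, ENNReal.ofReal (|x| ^ (-s'))
          ≤ ENNReal.ofReal (2 * ((2*h) ^ (1-s') / (s'-1))) := by
        rw [hSdef, hNdef]
        exact Htail hs' Real.pi (by linarith)
      refine le_trans (mul_le_mul_right htail _) ?_
      rw [← ENNReal.ofReal_mul (Real.rpow_nonneg (mul_nonneg hK.le hh.le) _)]
      apply ENNReal.ofReal_le_ofReal
      have h1 : (K*h)^p = K^p * h^p := Real.mul_rpow hK.le hh.le
      have h2 : (2*h)^(1-s') = 2^(1-s') * h^(1-s') := Real.mul_rpow (by norm_num) hh.le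
      have h3 : h^p * h^(1-s') = h^e := by
        rw [← Real.rpow_add hh]
        congr 1
        rw [hedef, hs'def]; ring
      rw [h1, h2, hCFdef]
      apply le_of_eq
      calc K^p * h^p * (2*(2^(1-s') * h^(1-s')/(s'-1)))
          = K^p * (2 * (2^(1-s') / (s'-1))) * (h^p * h^(1-s')) := by ring
        _ = K^p * (2 * (2^(1-s') / (s'-1))) * h^e := by rw [h3]
    -- combine
    rw [hnorm_eq]
    have hsum : ∫⁻ x in S, ((‖f (x+h) - f x‖₊ : ℝ≥0∞)) ^ p
        ≤ ENNReal.ofReal (CN * h ^ e) + ENNReal.ofReal (CF * h ^ e) := by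
      have hsplit : ∫⁻ x in S, ((‖f (x+h) - f x‖₊ : ℝ≥0∞)) ^ p
          ≤ (∫⁻ x in S ∩ N, ((‖f (x+h) - f x‖₊ : ℝ≥0∞)) ^ p)
            + ∫⁻ x in S \ N, ((‖f (x+h) - f x‖₊ : ℝ≥0∞)) ^ p := by
        conv_lhs => rw [← Set.inter_union_diff S N]
        exact lintegral_union_le _ _ _
      exact le_trans hsplit
        (add_le_add (le_trans (lintegral_mono_set Set.inter_subset_right) hnear) hfar)
    have hhe : 0 ≤ h ^ e := Real.rpow_nonneg hh.le _
    calc (∫⁻ x in S, ((‖f (x+h) - f x‖₊ : ℝ≥0∞)) ^ p) ^ (1/p)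
        ≤ (ENNReal.ofReal (CN * h ^ e) + ENNReal.ofReal (CF * h ^ e)) ^ (1/p) :=
          ENNReal.rpow_le_rpow hsum (by positivity)
      _ = (ENNReal.ofReal ((CN + CF) * h ^ e)) ^ (1/p) := by
          rw [← ENNReal.ofReal_add (mul_nonneg hCN hhe) (mul_nonneg hCF hhe)]
          congr 1
          ring
      _ = ENNReal.ofReal (((CN + CF) * h ^ e) ^ (1/p)) :=
          ENNReal.ofReal_rpow_of_nonneg (mul_nonneg (by linarith) hhe) (by positivity)
      _ = ENNReal.ofReal (C₁ * h ^ γ) := by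
          congr 1
          rw [Real.mul_rpow (by linarith) hhe, hC₁def, ← Real.rpow_mul hh.le]
          congr 1
          rw [hedef, hγdef]
          field_simp
  -- assembly
  set C₂ : ℝ := (2*B₀) / ((Real.pi/3) ^ γ) with hC₂def
  have hπ3 : (0:ℝ) < Real.pi/3 := by linarith
  have hπ3γ : (0:ℝ) < (Real.pi/3) ^ γ := Real.rpow_pos_of_pos hπ3 _
  have hC₂ : 0 ≤ C₂ := by positivity
  set C : ℝ := max C₁ C₂ with hCdef
  have hC : 0 ≤ C := le_trans hC₁ (le_max_left _ _)
  have hperh : ∀ h : ℝ, 0 < h →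
      eLpNorm (fun x => f (x + h) - f x) P (volume.restrict S)
        ≤ ENNReal.ofReal (C * h ^ γ) := by
    intro h hh
    have hhγ : 0 ≤ h ^ γ := Real.rpow_nonneg hh.le _
    rcases le_or_gt h (Real.pi/3) with hc | hc
    · exact (hcore h hh hc).trans (ENNReal.ofReal_le_ofReal
        (mul_le_mul_of_nonneg_right (le_max_left _ _) hhγ))
    · refine (huniform h).trans (ENNReal.ofReal_le_ofReal ?_)
      have h1 : 2*B₀ = C₂ * (Real.pi/3) ^ γ := by
        rw [hC₂def, div_mul_cancel₀]
        exact hπ3γ.ne'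
      have h2 : (Real.pi/3) ^ γ ≤ h ^ γ := Real.rpow_le_rpow hπ3.le hc.le hγ.le
      calc 2*B₀ = C₂ * (Real.pi/3) ^ γ := h1
        _ ≤ C₂ * h ^ γ := mul_le_mul_of_nonneg_left h2 hC₂
        _ ≤ C * h ^ γ := mul_le_mul_of_nonneg_right (le_max_right _ _) hhγ
  constructor
  · refine ⟨hmeas.restrict, ?_⟩
    rw [hnorm_eq]
    exact lt_of_le_of_lt (ENNReal.rpow_le_rpow Ibound (by positivity))
      (ENNReal.rpow_lt_top_of_nonneg (by positivity) ENNReal.ofReal_ne_top)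
  · refine ⟨C, fun δ hδ => ?_⟩
    unfold modulusLp
    refine iSup₂_le fun h hh => ?_
    refine (hperh h hh.1).trans (ENNReal.ofReal_le_ofReal ?_)
    exact mul_le_mul_of_nonneg_left (Real.rpow_le_rpow hh.1.le hh.2 hγ.le) hC
end

section
/- Let 0 < γ < 1, 0 < θ < 1, and y₀ > 2. Then there exists a constant c > 0, depending only on γ, θ, and y₀, such that for every y with 1 < y < y₀, ∫_1^2 (xy−1)^{−θ}(x−1)^{−γ} dx ≥ c·(y−1)^{1−γ−θ}. -/
open MeasureTheory Real

theorem integral_lower_bound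
    (γ θ y₀ : ℝ) (hγ0 : 0 < γ) (hγ1 : γ < 1) (hθ0 : 0 < θ) (hθ1 : θ < 1) (hy₀ : 2 < y₀) :
    ∃ c > (0 : ℝ), ∀ y : ℝ, 1 < y → y < y₀ →
      c * (y - 1) ^ (1 - γ - θ) ≤ ∫ x in (1 : ℝ)..2, (x * y - 1) ^ (-θ) * (x - 1) ^ (-γ) := by
  have h1γ : (0:ℝ) < 1 - γ := by linarith
  refine ⟨(2:ℝ) ^ (-θ) * y₀ ^ (γ - 1) / (1 - γ), by positivity, ?_⟩
  intro y hy1 hyy₀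
  have hy0 : (0:ℝ) < y - 1 := by linarith
  have hyp : (0:ℝ) < y := by linarith
  set ε : ℝ := (y - 1) / y with hε
  have hε0 : 0 < ε := div_pos hy0 hyp
  have hε1 : ε < 1 := by
    rw [hε, div_lt_one hyp]; linarith
  -- integrability of (x-1)^(-γ) on [1,2]
  have hg : IntervalIntegrable (fun x : ℝ => (x - 1) ^ (-γ)) volume 1 2 := by
    have := (intervalIntegral.intervalIntegrable_rpow' (a := 0) (b := 1)
      (r := -γ) (by linarith)).comp_sub_right 1
    simpa [one_add_one_eq_two] using this
  have hgε : IntervalIntegrable (fun x : ℝ => (x - 1) ^ (-γ)) volume 1 (1 + ε) := by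
    apply hg.mono_set
    rw [Set.uIcc_of_le (by linarith), Set.uIcc_of_le (by norm_num)]
    exact Set.Icc_subset_Icc le_rfl (by linarith)
  -- integrability of the full integrand on [1,2]
  have hf : IntervalIntegrable (fun x : ℝ => (x * y - 1) ^ (-θ) * (x - 1) ^ (-γ))
      volume 1 2 := by
    apply hg.continuousOn_mul
    apply ContinuousOn.rpow_const (by fun_prop)
    intro x hx
    rw [Set.uIcc_of_le (by norm_num)] at hx
    left
    nlinarith [hx.1]
  have hfε : IntervalIntegrable (fun x : ℝ => (x * y - 1) ^ (-θ) * (x - 1) ^ (-γ))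
      volume 1 (1 + ε) := by
    apply hf.mono_set
    rw [Set.uIcc_of_le (by linarith), Set.uIcc_of_le (by norm_num)]
    exact Set.Icc_subset_Icc le_rfl (by linarith)
  have hnonneg : ∀ x : ℝ, 1 ≤ x → 0 ≤ (x * y - 1) ^ (-θ) * (x - 1) ^ (-γ) := by
    intro x hx
    have h1 : (0:ℝ) ≤ x * y - 1 := by nlinarith
    have h2 : (0:ℝ) ≤ x - 1 := by linarith
    exact mul_nonneg (Real.rpow_nonneg h1 _) (Real.rpow_nonneg h2 _)
  -- step 1: restrict to [1, 1+ε]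
  have step1 : (∫ x in (1:ℝ)..(1+ε), (x * y - 1) ^ (-θ) * (x - 1) ^ (-γ)) ≤
      ∫ x in (1:ℝ)..2, (x * y - 1) ^ (-θ) * (x - 1) ^ (-γ) := by
    apply intervalIntegral.integral_mono_interval le_rfl (by linarith) (by linarith)
    · rw [Filter.EventuallyLE, ae_restrict_iff' measurableSet_Ioc]
      filter_upwards with x hx using hnonneg x (le_of_lt hx.1)
    · exact hf
  -- step 2: pointwise bound on [1, 1+ε]
  have step2 : (∫ x in (1:ℝ)..(1+ε), (2*(y-1)) ^ (-θ) * (x - 1) ^ (-γ)) ≤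
      ∫ x in (1:ℝ)..(1+ε), (x * y - 1) ^ (-θ) * (x - 1) ^ (-γ) := by
    apply intervalIntegral.integral_mono_on (by linarith)
    · exact (hgε.const_mul _)
    · exact hfε
    · intro x hx
      have hx1 : (1:ℝ) ≤ x := hx.1
      have hb : (0:ℝ) < x * y - 1 := by nlinarith
      have hle : x * y - 1 ≤ 2 * (y - 1) := by
        have h3 : (x - 1) * y ≤ ε * y := by
          apply mul_le_mul_of_nonneg_right _ (le_of_lt hyp)
          linarith [hx.2]
        have h4 : ε * y = y - 1 := div_mul_cancel₀ _ (ne_of_gt hyp)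
        nlinarith
      exact mul_le_mul_of_nonneg_right
        (Real.rpow_le_rpow_of_nonpos hb hle (by linarith))
        (Real.rpow_nonneg (by linarith) _)
  -- step 3: compute the integral of (x-1)^(-γ)
  have step3 : (∫ x in (1:ℝ)..(1+ε), (x - 1) ^ (-γ)) = ε ^ (1 - γ) / (1 - γ) := by
    have : (∫ x in (1:ℝ)..(1+ε), (x - 1) ^ (-γ)) = ∫ x in (0:ℝ)..ε, x ^ (-γ) := by
      have := intervalIntegral.integral_comp_sub_right (a := 1) (b := 1 + ε)
        (fun x : ℝ => x ^ (-γ)) 1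
      simpa using this
    rw [this, integral_rpow (Or.inl (by linarith))]
    rw [Real.zero_rpow (by linarith)]
    ring_nf
  have step2' : (2*(y-1)) ^ (-θ) * (ε ^ (1 - γ) / (1 - γ)) ≤
      ∫ x in (1:ℝ)..(1+ε), (x * y - 1) ^ (-θ) * (x - 1) ^ (-γ) := by
    calc (2*(y-1)) ^ (-θ) * (ε ^ (1 - γ) / (1 - γ))
        = ∫ x in (1:ℝ)..(1+ε), (2*(y-1)) ^ (-θ) * (x - 1) ^ (-γ) := by
          rw [intervalIntegral.integral_const_mul, step3]
      _ ≤ _ := step2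
  refine le_trans ?_ (le_trans step2' step1)
  -- final algebra
  have e1 : (2*(y-1)) ^ (-θ) = 2 ^ (-θ) * (y-1) ^ (-θ) :=
    Real.mul_rpow (by norm_num) (le_of_lt hy0)
  have e2 : ε ^ (1 - γ) = (y-1) ^ (1-γ) / y ^ (1-γ) :=
    Real.div_rpow (le_of_lt hy0) (le_of_lt hyp) _
  rw [e1, e2]
  have e3 : (y-1) ^ (-θ) * (y-1) ^ (1-γ) = (y-1) ^ (1-γ-θ) := by
    rw [← Real.rpow_add hy0]; ring_nf
  have e4 : y₀ ^ (γ - 1) ≤ y ^ (γ - 1) :=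
    Real.rpow_le_rpow_of_nonpos hyp (le_of_lt hyy₀) (by linarith)
  have e5 : y ^ (γ - 1) = (y ^ (1 - γ))⁻¹ := by
    rw [← Real.rpow_neg (le_of_lt hyp)]; ring_nf
  have hyg : (0:ℝ) < y ^ (1-γ) := Real.rpow_pos_of_pos hyp _
  rw [div_eq_mul_inv, div_eq_mul_inv]
  calc 2 ^ (-θ) * y₀ ^ (γ - 1) * (1-γ)⁻¹ * (y - 1) ^ (1 - γ - θ)
      ≤ 2 ^ (-θ) * y ^ (γ - 1) * (1-γ)⁻¹ * (y - 1) ^ (1 - γ - θ) := by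
        gcongr
    _ = 2 ^ (-θ) * (y-1) ^ (-θ) * ((y-1) ^ (1-γ) * (y ^ (1-γ))⁻¹ * (1-γ)⁻¹) := by
        rw [e5, ← e3]
        ring
end

section
/- Let ν be a positive integer, let α, β be real numbers with 0 < α + β < 1/ν, let η satisfy (α+β)/2 < η < 1/(2ν), and let t ∈ (0,π). Define A_t = {(z₁,…,z_{2ν}) ∈ ℝ^{2ν} : |z₁| ≤ t, |z₁z₂| ≤ t, …, |z₁⋯z_{2ν}| ≤ t, and |z₁| > (1/2)|z₁z₂| > (1/4)|z₁z₂z₃| > … > (1/2^{2ν−1})|z₁⋯z_{2ν}| > (1/2^{2ν})|z₁|}. Then the integral I = ∫_{A_t} |z₁|^{2νη−ν(α+β)−1} · |z₂⋯z_{2ν} − 1|^{η−1} · ∏_{i=2}^{2ν} |zᵢ − 1|^{η−1} dz₁⋯dz_{2ν} diverges, i.e., I = +∞. -/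
open MeasureTheory Real

set_option maxHeartbeats 1000000

private lemma aux_one_add_pow_le (s : ℝ) (hs0 : 0 ≤ s) (hs1 : s ≤ 1) (m : ℕ) :
    (1 + s) ^ m ≤ 1 + (2 ^ m - 1) * s := by
  induction m with
  | zero => simp
  | succ m ih =>
      have h1 : (0:ℝ) ≤ 1 + s := by linarith
      have h3 : (1:ℝ) ≤ 2 ^ m := one_le_pow₀ (by norm_num)
      have h2 : (1 + s) ^ (m+1) = (1+s)^m * (1+s) := pow_succ _ _
      have h4 : (2:ℝ) ^ (m+1) = 2^m * 2 := pow_succ _ _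
      nlinarith [mul_le_mul_of_nonneg_right ih h1, mul_le_mul_of_nonneg_left hs1 hs0]

theorem LP_integral_diverges
    (ν : ℕ) (hν : 0 < ν) (α β η t : ℝ)
    (hαβ0 : 0 < α + β) (hαβ1 : α + β < 1 / (ν : ℝ))
    (hη1 : (α + β) / 2 < η) (hη2 : η < 1 / (2 * (ν : ℝ)))
    (ht : t ∈ Set.Ioo 0 Real.pi) :
    (∫⁻ z in {z : Fin (2 * ν) → ℝ |
        (∀ k : Fin (2 * ν), |∏ i ∈ Finset.univ.filter (fun i => i ≤ k), z i| ≤ t) ∧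
        (∀ k : ℕ, ∀ hk : k + 1 < 2 * ν,
          (1 / 2 ^ (k + 1) : ℝ) *
              |∏ i ∈ Finset.univ.filter (fun i => i ≤ (⟨k + 1, hk⟩ : Fin (2 * ν))), z i| <
          (1 / 2 ^ k : ℝ) *
              |∏ i ∈ Finset.univ.filter (fun i => i ≤ (⟨k, by omega⟩ : Fin (2 * ν))), z i|) ∧
        (1 / 2 ^ (2 * ν) : ℝ) * |z ⟨0, by omega⟩| <
          (1 / 2 ^ (2 * ν - 1) : ℝ) * |∏ i, z i|},
      ENNReal.ofReal
        (|z ⟨0, by omega⟩| ^ (2 * (ν : ℝ) * η - (ν : ℝ) * (α + β) - 1) *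
          |(∏ i ∈ Finset.univ.erase (⟨0, by omega⟩ : Fin (2 * ν)), z i) - 1| ^ (η - 1) *
          ∏ i ∈ Finset.univ.erase (⟨0, by omega⟩ : Fin (2 * ν)), |z i - 1| ^ (η - 1))) = ⊤ := by
  obtain ⟨ht0, htπ⟩ := ht
  have hν2 : 0 < 2 * ν := by omega
  have hνR : (1:ℝ) ≤ (ν:ℝ) := by exact_mod_cast hν
  set i0 : Fin (2 * ν) := ⟨0, by omega⟩ with hi0def
  set e₁ : ℝ := 2 * (ν:ℝ) * η - (ν:ℝ) * (α + β) - 1 with he₁def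
  set e₂ : ℝ := η - 1 with he₂def
  have hη0 : 0 < η := lt_trans (by linarith) hη1
  have h2ν1 : (1:ℝ) ≤ 2 * (ν:ℝ) := by linarith
  have h2νη : 2 * (ν:ℝ) * η < 1 := by
    rw [lt_div_iff₀ (by linarith : (0:ℝ) < 2 * (ν:ℝ))] at hη2
    linarith
  have he₂0 : e₂ < 0 := by
    have : η < 1 := by nlinarith
    simp only [he₂def]; linarith
  set b : ℝ := t / 2 ^ (2 * ν) with hbdef
  set a : ℝ := t / 2 ^ (2 * ν + 1) with hadef
  have hb0 : 0 < b := by positivity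
  have ha0 : 0 < a := by positivity
  have hab : a < b := by
    apply div_lt_div_of_pos_left ht0 (by positivity)
    exact pow_lt_pow_right₀ (by norm_num) (by omega)
  set c₁ : ℝ := min (a ^ e₁) (b ^ e₁) with hc₁def
  have hc₁ : 0 < c₁ := lt_min (rpow_pos_of_pos ha0 _) (rpow_pos_of_pos hb0 _)
  set m : ℕ := 2 * ν - 1 with hmdef
  have hmcard : (Finset.univ.erase i0).card = m := by
    rw [Finset.card_erase_of_mem (Finset.mem_univ _), Finset.card_univ, Fintype.card_fin]
  set K : ℝ := c₁ * ((2:ℝ) ^ (2 * ν)) ^ e₂ * (b - a) with hKdef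
  have hK : 0 < K := by
    apply mul_pos (mul_pos hc₁ (rpow_pos_of_pos (by positivity) _))
    linarith
  -- the box B s
  have key : ∀ s : ℝ, 0 < s → s ≤ 1 →
      ENNReal.ofReal (K * s ^ (2 * (ν:ℝ) * η - 1)) ≤
      (∫⁻ z in {z : Fin (2 * ν) → ℝ |
        (∀ k : Fin (2 * ν), |∏ i ∈ Finset.univ.filter (fun i => i ≤ k), z i| ≤ t) ∧
        (∀ k : ℕ, ∀ hk : k + 1 < 2 * ν,
          (1 / 2 ^ (k + 1) : ℝ) *
              |∏ i ∈ Finset.univ.filter (fun i => i ≤ (⟨k + 1, hk⟩ : Fin (2 * ν))), z i| <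
          (1 / 2 ^ k : ℝ) *
              |∏ i ∈ Finset.univ.filter (fun i => i ≤ (⟨k, by omega⟩ : Fin (2 * ν))), z i|) ∧
        (1 / 2 ^ (2 * ν) : ℝ) * |z ⟨0, by omega⟩| <
          (1 / 2 ^ (2 * ν - 1) : ℝ) * |∏ i, z i|},
      ENNReal.ofReal
        (|z ⟨0, by omega⟩| ^ (2 * (ν : ℝ) * η - (ν : ℝ) * (α + β) - 1) *
          |(∏ i ∈ Finset.univ.erase (⟨0, by omega⟩ : Fin (2 * ν)), z i) - 1| ^ (η - 1) *
          ∏ i ∈ Finset.univ.erase (⟨0, by omega⟩ : Fin (2 * ν)), |z i - 1| ^ (η - 1))) := by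
    intro s hs0 hs1
    set B : Set (Fin (2 * ν) → ℝ) :=
      Set.univ.pi (fun i => if i = i0 then Set.Ioo a b else Set.Ioo 1 (1 + s)) with hBdef
    have hBmeas : MeasurableSet B := by
      apply MeasurableSet.univ_pi
      intro i
      split <;> exact measurableSet_Ioo
    -- facts about points of B
    have hmem : ∀ z ∈ B, (z i0 ∈ Set.Ioo a b) ∧ ∀ i : Fin (2*ν), i ≠ i0 → z i ∈ Set.Ioo 1 (1+s) := by
      intro z hz
      rw [hBdef, Set.mem_pi] at hz
      constructor
      · have := hz i0 (Set.mem_univ _); rwa [if_pos rfl] at this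
      · intro i hi; have := hz i (Set.mem_univ _); rwa [if_neg hi] at this
    have hzpos : ∀ z ∈ B, ∀ i, 0 < z i := by
      intro z hz i
      obtain ⟨h0, hrest⟩ := hmem z hz
      by_cases hi : i = i0
      · subst hi; exact lt_trans ha0 h0.1
      · exact lt_trans one_pos (hrest i hi).1
    -- B is contained in the domain of integration
    have hBsub : B ⊆ {z : Fin (2 * ν) → ℝ |
        (∀ k : Fin (2 * ν), |∏ i ∈ Finset.univ.filter (fun i => i ≤ k), z i| ≤ t) ∧
        (∀ k : ℕ, ∀ hk : k + 1 < 2 * ν,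
          (1 / 2 ^ (k + 1) : ℝ) *
              |∏ i ∈ Finset.univ.filter (fun i => i ≤ (⟨k + 1, hk⟩ : Fin (2 * ν))), z i| <
          (1 / 2 ^ k : ℝ) *
              |∏ i ∈ Finset.univ.filter (fun i => i ≤ (⟨k, by omega⟩ : Fin (2 * ν))), z i|) ∧
        (1 / 2 ^ (2 * ν) : ℝ) * |z ⟨0, by omega⟩| <
          (1 / 2 ^ (2 * ν - 1) : ℝ) * |∏ i, z i|} := by
      intro z hz
      obtain ⟨hz0, hzi⟩ := hmem z hz
      have hpos := hzpos z hz
      have hz2 : ∀ i : Fin (2*ν), i ≠ i0 → z i < 2 := by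
        intro i hi; have := (hzi i hi).2; linarith
      have hprodT : ∀ T : Finset (Fin (2*ν)), i0 ∉ T →
          1 ≤ ∏ i ∈ T, z i ∧ ∏ i ∈ T, z i ≤ 2 ^ (2*ν - 1) := by
        intro T hT
        have h1 : ∀ i ∈ T, 1 ≤ z i := by
          intro i hi
          exact ((hzi i (fun h => hT (h ▸ hi))).1).le
        constructor
        · calc (1:ℝ) = ∏ _i ∈ T, (1:ℝ) := by simp
            _ ≤ ∏ i ∈ T, z i := Finset.prod_le_prod (by norm_num) h1
        · calc ∏ i ∈ T, z i ≤ ∏ _i ∈ T, (2:ℝ) := by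
                refine Finset.prod_le_prod (fun i hi => by linarith [h1 i hi]) ?_
                intro i hi
                exact (hz2 i (fun h => hT (h ▸ hi))).le
            _ = 2 ^ T.card := by rw [Finset.prod_const]
            _ ≤ 2 ^ (2*ν - 1) := by
                apply pow_le_pow_right₀ one_le_two
                have hTsub : T ⊆ Finset.univ.erase i0 := by
                  intro i hi
                  exact Finset.mem_erase.mpr ⟨fun h => hT (h ▸ hi), Finset.mem_univ _⟩
                calc T.card ≤ (Finset.univ.erase i0).card := Finset.card_le_card hTsub
                  _ = m := hmcard
                  _ ≤ 2*ν - 1 := le_of_eq rfl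
      simp only [Set.mem_setOf_eq]
      have hps : (2:ℝ) ^ (2*ν) = 2 * 2 ^ (2*ν - 1) := by
        conv_lhs => rw [show 2*ν = (2*ν-1)+1 by omega]
        rw [pow_succ']
      have h2m : (0:ℝ) < 2 ^ (2*ν-1) := by positivity
      refine ⟨?_, ?_, ?_⟩
      · -- first condition
        intro k
        have h0k : i0 ∈ Finset.univ.filter (fun i => i ≤ k) :=
          Finset.mem_filter.mpr ⟨Finset.mem_univ i0, Fin.le_def.mpr (Nat.zero_le _)⟩
        rw [← Finset.mul_prod_erase _ z h0k]
        set T := (Finset.univ.filter (fun i : Fin (2*ν) => i ≤ k)).erase i0 with hTdef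
        obtain ⟨hT1, hT2⟩ := hprodT T (Finset.notMem_erase _ _)
        have hz0pos : 0 < z i0 := hpos i0
        rw [abs_of_pos (by nlinarith)]
        have hb' : b * 2 ^ (2*ν) = t := div_mul_cancel₀ t (by positivity)
        nlinarith [mul_le_mul hz0.2.le hT2 (by linarith) hb0.le]
      · -- chain condition
        intro k hk
        have hfs : Finset.univ.filter (fun i : Fin (2*ν) => i ≤ (⟨k + 1, hk⟩ : Fin (2*ν)))
            = insert (⟨k + 1, hk⟩ : Fin (2*ν))
                (Finset.univ.filter (fun i : Fin (2*ν) => i ≤ (⟨k, by omega⟩ : Fin (2*ν)))) := by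
          ext i
          simp only [Finset.mem_filter, Finset.mem_insert, Finset.mem_univ, true_and, Fin.le_def,
            Fin.ext_iff]
          omega
        have hnm : (⟨k + 1, hk⟩ : Fin (2*ν)) ∉
            Finset.univ.filter (fun i : Fin (2*ν) => i ≤ (⟨k, by omega⟩ : Fin (2*ν))) := by
          simp [Fin.le_def]
        rw [hfs, Finset.prod_insert hnm]
        set P := ∏ i ∈ Finset.univ.filter (fun i : Fin (2*ν) => i ≤ (⟨k, by omega⟩ : Fin (2*ν))), z i with hPdef
        have hPpos : 0 < P := Finset.prod_pos (fun i _ => hpos i)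
        have hzk : z (⟨k + 1, hk⟩ : Fin (2*ν)) < 2 := by
          apply hz2
          simp [hi0def, Fin.ext_iff]
        have hzkpos : 0 < z (⟨k + 1, hk⟩ : Fin (2*ν)) := hpos _
        rw [abs_mul, abs_of_pos hzkpos, abs_of_pos hPpos]
        have h2k : (0:ℝ) < 2 ^ k := by positivity
        have hpsk : (2:ℝ) ^ (k+1) = 2 ^ k * 2 := pow_succ _ _
        rw [hpsk, div_mul_eq_mul_div, div_mul_eq_mul_div, div_lt_div_iff₀ (by positivity) (by positivity)]
        nlinarith [mul_lt_mul_of_pos_right (mul_lt_mul_of_pos_right hzk hPpos) h2k]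
      · -- last condition
        rw [← Finset.mul_prod_erase _ z (Finset.mem_univ i0)]
        obtain ⟨hQ1, _⟩ := hprodT (Finset.univ.erase i0) (Finset.notMem_erase _ _)
        have hz0pos : 0 < z i0 := hpos i0
        rw [abs_of_pos hz0pos, abs_of_pos (by nlinarith)]
        rw [div_mul_eq_mul_div, div_mul_eq_mul_div, div_lt_div_iff₀ (by positivity) (by positivity)]
        nlinarith [mul_le_mul_of_nonneg_left hQ1 hz0pos.le]
    -- the constant lower bound on B
    set D : ℝ := c₁ * (((2:ℝ) ^ (2*ν)) * s) ^ e₂ * (s ^ e₂) ^ m with hDdef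
    have hD0 : 0 ≤ D := by positivity
    have hpt : ∀ z ∈ B, ENNReal.ofReal D ≤
        ENNReal.ofReal
          (|z i0| ^ e₁ *
            |(∏ i ∈ Finset.univ.erase i0, z i) - 1| ^ e₂ *
            ∏ i ∈ Finset.univ.erase i0, |z i - 1| ^ e₂) := by
      intro z hz
      obtain ⟨hz0, hzi⟩ := hmem z hz
      have hzi1 : ∀ i ∈ Finset.univ.erase i0, 1 < z i :=
        fun i hi => (hzi i (Finset.ne_of_mem_erase hi)).1
      have hne : (Finset.univ.erase i0).Nonempty := by
        rw [← Finset.card_pos, hmcard]; omega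
      have hQ1 : 1 < ∏ i ∈ Finset.univ.erase i0, z i := by
        obtain ⟨j, hj⟩ := hne
        rw [← Finset.mul_prod_erase _ z hj]
        have hrest : 1 ≤ ∏ i ∈ (Finset.univ.erase i0).erase j, z i := by
          calc (1:ℝ) = ∏ _i ∈ (Finset.univ.erase i0).erase j, (1:ℝ) := by simp
            _ ≤ _ := Finset.prod_le_prod (by norm_num)
                (fun i hi => (hzi1 i (Finset.mem_of_mem_erase hi)).le)
        nlinarith [hzi1 j hj]
      have hQub : ∏ i ∈ Finset.univ.erase i0, z i ≤ (1+s) ^ m := by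
        calc ∏ i ∈ Finset.univ.erase i0, z i
            ≤ ∏ _i ∈ Finset.univ.erase i0, (1+s) := by
              refine Finset.prod_le_prod (fun i hi => by linarith [hzi1 i hi]) ?_
              intro i hi
              exact ((hzi i (Finset.ne_of_mem_erase hi)).2).le
          _ = (1+s) ^ m := by rw [Finset.prod_const, hmcard]
      have hQub2 : (∏ i ∈ Finset.univ.erase i0, z i) - 1 ≤ 2 ^ (2*ν) * s := by
        have h1 := aux_one_add_pow_le s hs0.le hs1 m
        have h2 : (2:ℝ) ^ m ≤ 2 ^ (2*ν) := pow_le_pow_right₀ one_le_two (by omega)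
        nlinarith [mul_le_mul_of_nonneg_right h2 hs0.le]
      have hf1 : c₁ ≤ |z i0| ^ e₁ := by
        rw [abs_of_pos (lt_trans ha0 hz0.1)]
        rcases le_or_gt 0 e₁ with h | h
        · exact le_trans (min_le_left _ _) (Real.rpow_le_rpow ha0.le hz0.1.le h)
        · exact le_trans (min_le_right _ _)
            (Real.rpow_le_rpow_of_nonpos (lt_trans ha0 hz0.1) hz0.2.le h.le)
      have hf2 : (((2:ℝ) ^ (2*ν)) * s) ^ e₂ ≤ |(∏ i ∈ Finset.univ.erase i0, z i) - 1| ^ e₂ := by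
        rw [abs_of_pos (by linarith)]
        exact Real.rpow_le_rpow_of_nonpos (by linarith) hQub2 he₂0.le
      have hf3 : (s ^ e₂) ^ m ≤ ∏ i ∈ Finset.univ.erase i0, |z i - 1| ^ e₂ := by
        calc (s ^ e₂) ^ m = ∏ _i ∈ Finset.univ.erase i0, s ^ e₂ := by
              rw [Finset.prod_const, hmcard]
          _ ≤ ∏ i ∈ Finset.univ.erase i0, |z i - 1| ^ e₂ := by
              refine Finset.prod_le_prod (fun i _ => by positivity) ?_
              intro i hi
              have h1 : 1 < z i := hzi1 i hi
              have h2 : z i - 1 ≤ s := by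
                have := (hzi i (Finset.ne_of_mem_erase hi)).2; linarith
              rw [abs_of_pos (by linarith)]
              exact Real.rpow_le_rpow_of_nonpos (by linarith) h2 he₂0.le
      apply ENNReal.ofReal_le_ofReal
      rw [hDdef]
      exact mul_le_mul (mul_le_mul hf1 hf2 (by positivity) (by positivity)) hf3
        (by positivity) (by positivity)
    -- the volume of B
    have hvol : volume B = ENNReal.ofReal (b - a) * ENNReal.ofReal s ^ m := by
      rw [hBdef, volume_pi_pi]
      rw [← Finset.mul_prod_erase _ _ (Finset.mem_univ i0), if_pos rfl, Real.volume_Ioo]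
      congr 1
      rw [Finset.prod_congr rfl (fun i hi => by rw [if_neg (Finset.ne_of_mem_erase hi)]),
        Finset.prod_const, hmcard, Real.volume_Ioo]
      norm_num
    -- exponent arithmetic
    have hm1 : (m:ℝ) + 1 = 2 * (ν:ℝ) := by
      have h : m + 1 = 2 * ν := by omega
      exact_mod_cast h
    have hexp : 2 * (ν:ℝ) * η - 1 = e₂ + e₂ * (m:ℝ) + (m:ℝ) := by
      have h : (m:ℝ) = 2 * (ν:ℝ) - 1 := by linarith
      rw [he₂def, h]; ring
    have hsplit : s ^ (2 * (ν:ℝ) * η - 1) = s ^ e₂ * (s ^ e₂) ^ m * s ^ m := by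
      rw [← Real.rpow_natCast (s ^ e₂) m, ← Real.rpow_mul hs0.le, ← Real.rpow_natCast s m,
        ← Real.rpow_add hs0, ← Real.rpow_add hs0, hexp]
    have hreal : K * s ^ (2 * (ν:ℝ) * η - 1) = D * ((b - a) * s ^ m) := by
      rw [hKdef, hDdef, hsplit, Real.mul_rpow (by positivity) hs0.le]
      ring
    calc ENNReal.ofReal (K * s ^ (2 * (ν:ℝ) * η - 1))
        = ENNReal.ofReal D * volume B := by
          rw [hreal, ENNReal.ofReal_mul hD0,
            ENNReal.ofReal_mul (by linarith : (0:ℝ) ≤ b - a), ENNReal.ofReal_pow hs0.le, hvol]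
      _ = ∫⁻ _z in B, ENNReal.ofReal D := (setLIntegral_const _ _).symm
      _ ≤ _ := le_trans (setLIntegral_mono' hBmeas hpt) (lintegral_mono_set hBsub)
  -- conclusion from the key estimate
  refine ENNReal.eq_top_of_forall_nnreal_le fun r => ?_
  set c : ℝ := 1 - 2 * (ν:ℝ) * η with hcdef
  have hc : 0 < c := by rw [hcdef]; linarith
  have hr1 : (0:ℝ) < (r:ℝ) + 1 := by positivity
  set s : ℝ := min 1 ((K / ((r:ℝ) + 1)) ^ (1/c)) with hsdef
  have hs0 : 0 < s := lt_min one_pos (Real.rpow_pos_of_pos (by positivity) _)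
  have hs1 : s ≤ 1 := min_le_left _ _
  refine le_trans ?_ (key s hs0 hs1)
  rw [← ENNReal.ofReal_coe_nnreal]
  apply ENNReal.ofReal_le_ofReal
  have hsc : s ^ c ≤ K / ((r:ℝ) + 1) := by
    calc s ^ c ≤ ((K / ((r:ℝ)+1)) ^ (1/c)) ^ c :=
          Real.rpow_le_rpow hs0.le (min_le_right _ _) hc.le
      _ = K / ((r:ℝ)+1) := by
          rw [← Real.rpow_mul (by positivity), one_div, inv_mul_cancel₀ hc.ne', Real.rpow_one]
  have hscpos : 0 < s ^ c := Real.rpow_pos_of_pos hs0 _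
  have h1 : (r:ℝ) + 1 ≤ K / s ^ c := by
    rw [le_div_iff₀ hscpos]
    calc ((r:ℝ)+1) * s ^ c ≤ ((r:ℝ)+1) * (K / ((r:ℝ)+1)) :=
          mul_le_mul_of_nonneg_left hsc (by positivity)
      _ = K := by field_simp
  have h2 : K * s ^ (2 * (ν:ℝ) * η - 1) = K / s ^ c := by
    rw [show 2 * (ν:ℝ) * η - 1 = -c by rw [hcdef]; ring, Real.rpow_neg hs0.le, div_eq_mul_inv]
  rw [h2]
  linarith
end

section
/- Let γ ∈ (0,1], let p₀, p₁, p₂, p₃ ∈ [1,∞] satisfy 1/p₀ + 1/p₁ + 1/p₂ + 1/p₃ ≤ 1, and let h₀, h₁, h₂, h₃ be 2π-periodic real-valued functions with hᵢ ∈ Lip(pᵢ, γ) for i = 0,1,2,3. Define φ(t₁,t₂,t₃) = ∫_{−π}^{π} h₀(u) h₁(u−t₁) h₂(u−t₂) h₃(u−t₃) du. Then there exists a constant C > 0 such that |φ(t) − φ(0,0,0)| ≤ C·(|t₁|+|t₂|+|t₃|)^γ for all t = (t₁,t₂,t₃) ∈ [−π,π]³. -/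
open MeasureTheory Real
open scoped ENNReal

section PhiLipschitzAux

open Set

local notation "μπ" => MeasureTheory.volume.restrict (Set.Ioc (-Real.pi) Real.pi)


lemma map_add_restrict_Ioc (a b c : ℝ) :
    Measure.map (· + a) (volume.restrict (Ioc b c)) = volume.restrict (Ioc (b + a) (c + a)) := by
  have h : (· + a) ⁻¹' (Ioc (b + a) (c + a)) = Ioc b c := by
    ext x
    simp only [mem_preimage, mem_Ioc]
    constructor <;> rintro ⟨h1, h2⟩ <;> exact ⟨by linarith, by linarith⟩
  rw [← h, ← Measure.restrict_map (measurable_add_const a) measurableSet_Ioc,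
    map_add_right_eq_self]

lemma eLpNorm_comp_add (f : ℝ → ℝ) (p : ℝ≥0∞) (a b c : ℝ) :
    eLpNorm (fun x => f (x + a)) p (volume.restrict (Ioc b c))
      = eLpNorm f p (volume.restrict (Ioc (b + a) (c + a))) := by
  rw [← map_add_restrict_Ioc a b c,
    (measurableEmbedding_addRight a).eLpNorm_map_measure]
  rfl

lemma aesm_comp_add_iff (f : ℝ → ℝ) (a b c : ℝ) :
    AEStronglyMeasurable (fun x => f (x + a)) (volume.restrict (Ioc b c))
      ↔ AEStronglyMeasurable f (volume.restrict (Ioc (b + a) (c + a))) := by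
  rw [← map_add_restrict_Ioc a b c,
    (measurableEmbedding_addRight a).aestronglyMeasurable_map_iff]
  rfl

lemma eLpNorm_add_measure_le {α : Type*} [MeasurableSpace α] (f : α → ℝ)
    (μ ν : Measure α) {p : ℝ≥0∞} (hp : 1 ≤ p) :
    eLpNorm f p (μ + ν) ≤ eLpNorm f p μ + eLpNorm f p ν := by
  by_cases htop : p = ∞
  · subst htop
    simp only [eLpNorm_exponent_top]
    refine essSup_le_of_ae_le _ ?_
    rw [Filter.EventuallyLE, ae_add_measure_iff]
    constructor
    · exact ae_le_eLpNormEssSup.mono fun x hx => hx.trans le_self_add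
    · exact ae_le_eLpNormEssSup.mono fun x hx => hx.trans le_add_self
  · have hz : p ≠ 0 := fun h => by simp [h] at hp
    have hpt : 1 ≤ p.toReal := by
      rw [← ENNReal.toReal_one]
      exact ENNReal.toReal_mono htop hp
    rw [eLpNorm_eq_lintegral_rpow_enorm_toReal hz htop, eLpNorm_eq_lintegral_rpow_enorm_toReal hz htop,
      eLpNorm_eq_lintegral_rpow_enorm_toReal hz htop, lintegral_add_measure]
    exact ENNReal.rpow_add_le_add_rpow _ _ (by positivity)
      (by rw [div_le_one (by linarith)]; linarith)

lemma restrict_split :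
    (volume.restrict (Ioc (-(3 * π)) (3 * π)) : Measure ℝ)
      = volume.restrict (Ioc (-(3 * π)) (-π))
        + (volume.restrict (Ioc (-π) π) + volume.restrict (Ioc π (3 * π))) := by
  have hπ := pi_pos
  have h1 : Ioc (-π) π ∪ Ioc π (3 * π) = Ioc (-π) (3 * π) :=
    Ioc_union_Ioc_eq_Ioc (by linarith) (by linarith)
  have h2 : Ioc (-(3 * π)) (-π) ∪ Ioc (-π) (3 * π) = Ioc (-(3 * π)) (3 * π) :=
    Ioc_union_Ioc_eq_Ioc (by linarith) (by linarith)
  rw [← h2, Measure.restrict_union (Ioc_disjoint_Ioc_of_le le_rfl) measurableSet_Ioc, ← h1,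
    Measure.restrict_union (Ioc_disjoint_Ioc_of_le le_rfl) measurableSet_Ioc]

lemma eLpNorm_piece_left (g : ℝ → ℝ) (hg : Function.Periodic g (2 * π)) (p : ℝ≥0∞) :
    eLpNorm g p (volume.restrict (Ioc (-(3 * π)) (-π))) = eLpNorm g p μπ := by
  have h := eLpNorm_comp_add g p (-(2 * π)) (-π) π
  have hfun : (fun x => g (x + -(2 * π))) = g := by
    funext x
    rw [← sub_eq_add_neg]
    exact hg.sub_eq x
  have he1 : -π + -(2 * π) = -(3 * π) := by ring
  have he2 : π + -(2 * π) = -π := by ring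
  rw [hfun, he1, he2] at h
  exact h.symm

lemma eLpNorm_piece_right (g : ℝ → ℝ) (hg : Function.Periodic g (2 * π)) (p : ℝ≥0∞) :
    eLpNorm g p (volume.restrict (Ioc π (3 * π))) = eLpNorm g p μπ := by
  have h := eLpNorm_comp_add g p (2 * π) (-π) π
  have hfun : (fun x => g (x + 2 * π)) = g := by
    funext x
    exact hg x
  have he1 : -π + 2 * π = π := by ring
  have he2 : π + 2 * π = 3 * π := by ring
  rw [hfun, he1, he2] at h
  exact h.symm

lemma eLpNorm_shift_le (g : ℝ → ℝ) (hg : Function.Periodic g (2 * π)) {p : ℝ≥0∞}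
    (hp : 1 ≤ p) (a : ℝ) (ha : |a| ≤ 2 * π) :
    eLpNorm (fun x => g (x + a)) p μπ ≤ 3 * eLpNorm g p μπ := by
  have hπ := pi_pos
  obtain ⟨ha1, ha2⟩ := abs_le.mp ha
  rw [eLpNorm_comp_add]
  calc eLpNorm g p (volume.restrict (Ioc (-π + a) (π + a)))
      ≤ eLpNorm g p (volume.restrict (Ioc (-(3 * π)) (3 * π))) :=
        eLpNorm_mono_measure _
          (Measure.restrict_mono (Ioc_subset_Ioc (by linarith) (by linarith)) le_rfl)
    _ ≤ eLpNorm g p (volume.restrict (Ioc (-(3 * π)) (-π)))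
          + (eLpNorm g p μπ + eLpNorm g p (volume.restrict (Ioc π (3 * π)))) := by
        rw [restrict_split]
        exact (eLpNorm_add_measure_le _ _ _ hp).trans
          (add_le_add_right (eLpNorm_add_measure_le _ _ _ hp) _)
    _ = 3 * eLpNorm g p μπ := by
        rw [eLpNorm_piece_left g hg, eLpNorm_piece_right g hg]; ring

lemma aesm_shift (g : ℝ → ℝ) (hg : Function.Periodic g (2 * π))
    (hm : AEStronglyMeasurable g μπ) (a : ℝ) (ha : |a| ≤ 2 * π) :
    AEStronglyMeasurable (fun x => g (x + a)) μπ := by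
  have hπ := pi_pos
  obtain ⟨ha1, ha2⟩ := abs_le.mp ha
  rw [aesm_comp_add_iff]
  have hleft : AEStronglyMeasurable g (volume.restrict (Ioc (-(3 * π)) (-π))) := by
    have h := (aesm_comp_add_iff g (-(2 * π)) (-π) π).mp
    have hfun : (fun x => g (x + -(2 * π))) = g := by
      funext x; rw [← sub_eq_add_neg]; exact hg.sub_eq x
    rw [hfun] at h
    have := h hm
    rwa [show -π + -(2 * π) = -(3 * π) by ring, show π + -(2 * π) = -π by ring] at this
  have hright : AEStronglyMeasurable g (volume.restrict (Ioc π (3 * π))) := by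
    have h := (aesm_comp_add_iff g (2 * π) (-π) π).mp
    have hfun : (fun x => g (x + 2 * π)) = g := by funext x; exact hg x
    rw [hfun] at h
    have := h hm
    rwa [show -π + 2 * π = π by ring, show π + 2 * π = 3 * π by ring] at this
  have h3 : AEStronglyMeasurable g (volume.restrict (Ioc (-(3 * π)) (3 * π))) := by
    rw [restrict_split]
    exact (hleft.add_measure (hm.add_measure hright))
  exact h3.mono_measure
    (Measure.restrict_mono (Ioc_subset_Ioc (by linarith) (by linarith)) le_rfl)

lemma diff_bound {p : ℝ≥0∞} (hp : 1 ≤ p) (g : ℝ → ℝ) (hg : Function.Periodic g (2 * π))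
    (hm : AEStronglyMeasurable g μπ) {C : ℝ} {γ : ℝ}
    (hC : ∀ δ : ℝ, 0 < δ → modulusLp p g δ ≤ ENNReal.ofReal (C * δ ^ γ))
    {t : ℝ} (ht : |t| ≤ π) :
    eLpNorm (fun u => g (u - t) - g u) p μπ ≤ 3 * ENNReal.ofReal (C * |t| ^ γ) := by
  have hπ := pi_pos
  rcases lt_trichotomy t 0 with htneg | htz | htpos
  · have h1 : (fun u => g (u - t) - g u) = fun u => g (u + -t) - g u := by
      funext u; rw [show u + -t = u - t from by ring]
    rw [h1]
    have hmem : -t ∈ Set.Ioc (0 : ℝ) |t| := ⟨by linarith, by rw [abs_of_neg htneg]⟩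
    have h2 : eLpNorm (fun u => g (u + -t) - g u) p μπ ≤ modulusLp p g |t| := by
      unfold modulusLp
      exact le_biSup
        (fun h => eLpNorm (fun x => g (x + h) - g x) p
          (volume.restrict (Set.Ioc (-Real.pi) Real.pi))) hmem
    refine h2.trans ((hC |t| (abs_pos.mpr htneg.ne)).trans ?_)
    exact le_mul_of_one_le_left zero_le (by norm_num)
  · subst htz
    simp only [sub_zero, sub_self]
    rw [eLpNorm_zero']
    exact zero_le
  · set D : ℝ → ℝ := fun v => g (v + t) - g v with hD
    have hDper : Function.Periodic D (2 * π) := by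
      intro x
      simp only [hD]
      rw [add_right_comm, hg (x + t), hg x]
    have hDm : AEStronglyMeasurable D μπ :=
      (aesm_shift g hg hm t (by rw [abs_of_pos htpos] at ht ⊢; linarith)).sub hm
    have h1 : (fun u => g (u - t) - g u) = fun u => -(D (u + -t)) := by
      funext u
      have e1 : u + -t = u - t := (sub_eq_add_neg u t).symm
      have e2 : u + -t + t = u := by ring
      show g (u - t) - g u = -(g (u + -t + t) - g (u + -t))
      rw [neg_sub, e2, e1]
    rw [h1]
    have hneg : eLpNorm (fun u => -(D (u + -t))) p μπ = eLpNorm (fun u => D (u + -t)) p μπ :=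
      eLpNorm_neg _ _ _
    rw [hneg]
    have h2 : eLpNorm (fun u => D (u + -t)) p μπ ≤ 3 * eLpNorm D p μπ :=
      eLpNorm_shift_le D hDper hp (-t) (by rw [abs_neg]; rw [abs_of_pos htpos] at ht ⊢; linarith)
    refine h2.trans (mul_le_mul_right ?_ 3)
    have hmem : t ∈ Set.Ioc (0 : ℝ) |t| := ⟨htpos, by rw [abs_of_pos htpos]⟩
    have h3 : eLpNorm D p μπ ≤ modulusLp p g |t| := by
      rw [hD]
      unfold modulusLp
      exact le_biSup
        (fun h => eLpNorm (fun x => g (x + h) - g x) p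
          (volume.restrict (Set.Ioc (-Real.pi) Real.pi))) hmem
    exact h3.trans (hC |t| (abs_pos.mpr htpos.ne'))

lemma holder4 {p₀ p₁ p₂ p₃ : ℝ≥0∞}
    (hsum : p₀⁻¹ + p₁⁻¹ + p₂⁻¹ + p₃⁻¹ ≤ 1)
    (f₀ f₁ f₂ f₃ : ℝ → ℝ)
    (m₀ : AEStronglyMeasurable f₀ μπ) (m₁ : AEStronglyMeasurable f₁ μπ)
    (m₂ : AEStronglyMeasurable f₂ μπ) (m₃ : AEStronglyMeasurable f₃ μπ) :
    eLpNorm (fun u => f₀ u * f₁ u * f₂ u * f₃ u) 1 μπ ≤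
      max 1 (volume (Set.Ioc (-π) π)) *
        (eLpNorm f₀ p₀ μπ * eLpNorm f₁ p₁ μπ * eLpNorm f₂ p₂ μπ * eLpNorm f₃ p₃ μπ) := by
  set q₂ : ℝ≥0∞ := (p₂⁻¹ + p₃⁻¹)⁻¹ with hq₂
  set q₁ : ℝ≥0∞ := (p₁⁻¹ + p₂⁻¹ + p₃⁻¹)⁻¹ with hq₁
  set r : ℝ≥0∞ := (p₀⁻¹ + p₁⁻¹ + p₂⁻¹ + p₃⁻¹)⁻¹ with hr
  have e23 : (1 : ℝ≥0∞) / q₂ = 1 / p₂ + 1 / p₃ := by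
    rw [hq₂]; simp only [one_div, inv_inv]
  have e123 : (1 : ℝ≥0∞) / q₁ = 1 / p₁ + 1 / q₂ := by
    rw [hq₁, hq₂]; simp only [one_div, inv_inv]; rw [add_assoc]
  have e0123 : (1 : ℝ≥0∞) / r = 1 / p₀ + 1 / q₁ := by
    rw [hr, hq₁]; simp only [one_div, inv_inv]; rw [add_assoc, add_assoc, add_assoc]
  have h23 : eLpNorm (fun u => f₂ u * f₃ u) q₂ μπ ≤ eLpNorm f₂ p₂ μπ * eLpNorm f₃ p₃ μπ := by
    have h := eLpNorm_smul_le_mul_eLpNorm (𝕜 := ℝ) (f := f₃) (φ := f₂)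
      (p := p₂) (q := p₃) (r := q₂) (hpqr := ⟨by simpa only [one_div] using e23.symm⟩) m₃ m₂
    have hsm : f₂ • f₃ = fun u => f₂ u * f₃ u := rfl
    rwa [hsm] at h
  have h123 : eLpNorm (fun u => f₁ u * (f₂ u * f₃ u)) q₁ μπ ≤
      eLpNorm f₁ p₁ μπ * eLpNorm (fun u => f₂ u * f₃ u) q₂ μπ := by
    have h := eLpNorm_smul_le_mul_eLpNorm (𝕜 := ℝ) (f := fun u => f₂ u * f₃ u) (φ := f₁)
      (p := p₁) (q := q₂) (r := q₁) (hpqr := ⟨by simpa only [one_div] using e123.symm⟩) (m₂.mul m₃) m₁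
    have hsm : f₁ • (fun u => f₂ u * f₃ u) = fun u => f₁ u * (f₂ u * f₃ u) := rfl
    rwa [hsm] at h
  have h0123 : eLpNorm (fun u => f₀ u * (f₁ u * (f₂ u * f₃ u))) r μπ ≤
      eLpNorm f₀ p₀ μπ * eLpNorm (fun u => f₁ u * (f₂ u * f₃ u)) q₁ μπ := by
    have h := eLpNorm_smul_le_mul_eLpNorm (𝕜 := ℝ)
      (f := fun u => f₁ u * (f₂ u * f₃ u)) (φ := f₀)
      (p := p₀) (q := q₁) (r := r) (hpqr := ⟨by simpa only [one_div] using e0123.symm⟩) (m₁.mul (m₂.mul m₃)) m₀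
    have hsm : f₀ • (fun u => f₁ u * (f₂ u * f₃ u)) = fun u => f₀ u * (f₁ u * (f₂ u * f₃ u)) := rfl
    rwa [hsm] at h
  have hfun : (fun u => f₀ u * f₁ u * f₂ u * f₃ u)
      = fun u => f₀ u * (f₁ u * (f₂ u * f₃ u)) := by funext u; ring
  have hr1 : (1 : ℝ≥0∞) ≤ r := by
    rw [hr, ← inv_one]
    exact ENNReal.inv_le_inv' hsum
  have hrt : 1 / r.toReal ≤ 1 := by
    by_cases hS : p₀⁻¹ + p₁⁻¹ + p₂⁻¹ + p₃⁻¹ = 0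
    · rw [hr, hS]; simp
    · have hSlt : p₀⁻¹ + p₁⁻¹ + p₂⁻¹ + p₃⁻¹ ≠ ∞ := (hsum.trans_lt ENNReal.one_lt_top).ne
      rw [hr, ENNReal.toReal_inv, one_div, inv_inv]
      calc (p₀⁻¹ + p₁⁻¹ + p₂⁻¹ + p₃⁻¹).toReal ≤ (1 : ℝ≥0∞).toReal :=
            ENNReal.toReal_mono ENNReal.one_ne_top hsum
        _ = 1 := ENNReal.toReal_one
  have hmeas : μπ Set.univ = volume (Set.Ioc (-π) π) := by
    rw [Measure.restrict_apply_univ]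
  have hcomp : eLpNorm (fun u => f₀ u * (f₁ u * (f₂ u * f₃ u))) 1 μπ ≤
      eLpNorm (fun u => f₀ u * (f₁ u * (f₂ u * f₃ u))) r μπ *
        μπ Set.univ ^ (1 / (1 : ℝ≥0∞).toReal - 1 / r.toReal) :=
    eLpNorm_le_eLpNorm_mul_rpow_measure_univ hr1 (m₀.mul (m₁.mul (m₂.mul m₃)))
  have hpow : μπ Set.univ ^ (1 / (1 : ℝ≥0∞).toReal - 1 / r.toReal)
      ≤ max 1 (volume (Set.Ioc (-π) π)) := by
    rw [hmeas]
    set B := volume (Set.Ioc (-π) π) with hB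
    have hexp0 : (0 : ℝ) ≤ 1 / (1 : ℝ≥0∞).toReal - 1 / r.toReal := by
      rw [ENNReal.toReal_one]
      have : 0 ≤ 1 / r.toReal := by positivity
      linarith
    have hexp1 : 1 / (1 : ℝ≥0∞).toReal - 1 / r.toReal ≤ 1 := by
      rw [ENNReal.toReal_one]
      have : 0 ≤ 1 / r.toReal := by positivity
      linarith
    rcases le_total B 1 with hB1 | hB1
    · exact (ENNReal.rpow_le_one hB1 hexp0).trans (le_max_left _ _)
    · calc B ^ (1 / (1 : ℝ≥0∞).toReal - 1 / r.toReal) ≤ B ^ (1 : ℝ) :=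
            ENNReal.rpow_le_rpow_of_exponent_le hB1 hexp1
        _ = B := ENNReal.rpow_one B
        _ ≤ max 1 B := le_max_right _ _
  rw [hfun]
  calc eLpNorm (fun u => f₀ u * (f₁ u * (f₂ u * f₃ u))) 1 μπ
      ≤ eLpNorm (fun u => f₀ u * (f₁ u * (f₂ u * f₃ u))) r μπ *
          μπ Set.univ ^ (1 / (1 : ℝ≥0∞).toReal - 1 / r.toReal) := hcomp
    _ ≤ (eLpNorm f₀ p₀ μπ * (eLpNorm f₁ p₁ μπ * (eLpNorm f₂ p₂ μπ * eLpNorm f₃ p₃ μπ))) *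
          max 1 (volume (Set.Ioc (-π) π)) := by
        refine mul_le_mul' (h0123.trans ?_) hpow
        refine mul_le_mul_right (h123.trans ?_) _
        exact mul_le_mul_right h23 _
    _ = max 1 (volume (Set.Ioc (-π) π)) *
          (eLpNorm f₀ p₀ μπ * eLpNorm f₁ p₁ μπ * eLpNorm f₂ p₂ μπ * eLpNorm f₃ p₃ μπ) := by
        ring

theorem phi_lipschitz_of_lipschitz
    (γ : ℝ) (hγ : γ ∈ Set.Ioc (0 : ℝ) 1)
    (p₀ p₁ p₂ p₃ : ℝ≥0∞) (hp₀ : 1 ≤ p₀) (hp₁ : 1 ≤ p₁) (hp₂ : 1 ≤ p₂) (hp₃ : 1 ≤ p₃)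
    (hsum : p₀⁻¹ + p₁⁻¹ + p₂⁻¹ + p₃⁻¹ ≤ 1)
    (h₀ h₁ h₂ h₃ : ℝ → ℝ)
    (hper₀ : Function.Periodic h₀ (2 * Real.pi))
    (hper₁ : Function.Periodic h₁ (2 * Real.pi))
    (hper₂ : Function.Periodic h₂ (2 * Real.pi))
    (hper₃ : Function.Periodic h₃ (2 * Real.pi))
    (hlip₀ : MemLip p₀ γ h₀) (hlip₁ : MemLip p₁ γ h₁)
    (hlip₂ : MemLip p₂ γ h₂) (hlip₃ : MemLip p₃ γ h₃) :
    ∃ C > (0 : ℝ), ∀ t₁ ∈ Set.Icc (-Real.pi) Real.pi, ∀ t₂ ∈ Set.Icc (-Real.pi) Real.pi,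
      ∀ t₃ ∈ Set.Icc (-Real.pi) Real.pi,
      |(∫ u in (-Real.pi)..Real.pi, h₀ u * h₁ (u - t₁) * h₂ (u - t₂) * h₃ (u - t₃)) -
        ∫ u in (-Real.pi)..Real.pi, h₀ u * h₁ u * h₂ u * h₃ u| ≤
      C * (|t₁| + |t₂| + |t₃|) ^ γ := by
  have hπ := pi_pos
  obtain ⟨hγpos, hγ1⟩ := hγ
  obtain ⟨⟨m₀, hN₀⟩, Cc₀, hCc₀⟩ := hlip₀
  obtain ⟨⟨m₁, hN₁⟩, Cc₁, hCc₁⟩ := hlip₁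
  obtain ⟨⟨m₂, hN₂⟩, Cc₂, hCc₂⟩ := hlip₂
  obtain ⟨⟨m₃, hN₃⟩, Cc₃, hCc₃⟩ := hlip₃
  set N₀ := eLpNorm h₀ p₀ μπ with hN₀def
  set N₁ := eLpNorm h₁ p₁ μπ with hN₁def
  set N₂ := eLpNorm h₂ p₂ μπ with hN₂def
  set N₃ := eLpNorm h₃ p₃ μπ with hN₃def
  set K : ℝ≥0∞ := max 1 (volume (Set.Ioc (-π) π)) with hKdef
  have hKne : K ≠ ∞ := by
    rw [hKdef]
    simp only [ne_eq, max_eq_top, ENNReal.one_ne_top, false_or]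
    rw [Real.volume_Ioc]
    exact ENNReal.ofReal_ne_top
  set Cm : ℝ := max 0 (max Cc₁ (max Cc₂ Cc₃)) with hCmdef
  have hCm0 : 0 ≤ Cm := le_max_left _ _
  set M : ℝ≥0∞ := K * (27 * ENNReal.ofReal Cm *
    ((N₀ + 1) * ((N₁ + 1) * ((N₂ + 1) * (N₃ + 1))))) with hMdef
  have hMne : M ≠ ∞ := by
    rw [hMdef]
    refine ENNReal.mul_ne_top hKne (ENNReal.mul_ne_top
      (ENNReal.mul_ne_top (by norm_num) ENNReal.ofReal_ne_top) ?_)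
    refine ENNReal.mul_ne_top ?_ (ENNReal.mul_ne_top ?_ (ENNReal.mul_ne_top ?_ ?_)) <;>
      first
      | exact ENNReal.add_ne_top.mpr ⟨hN₀.ne, ENNReal.one_ne_top⟩
      | exact ENNReal.add_ne_top.mpr ⟨hN₁.ne, ENNReal.one_ne_top⟩
      | exact ENNReal.add_ne_top.mpr ⟨hN₂.ne, ENNReal.one_ne_top⟩
      | exact ENNReal.add_ne_top.mpr ⟨hN₃.ne, ENNReal.one_ne_top⟩
  refine ⟨3 * M.toReal + 1, by positivity, ?_⟩
  intro t₁ ht₁ t₂ ht₂ t₃ ht₃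
  have ha₁ : |t₁| ≤ π := abs_le.mpr ⟨ht₁.1, ht₁.2⟩
  have ha₂ : |t₂| ≤ π := abs_le.mpr ⟨ht₂.1, ht₂.2⟩
  have ha₃ : |t₃| ≤ π := abs_le.mpr ⟨ht₃.1, ht₃.2⟩
  -- measurability of shifted functions
  have hshift_eq : ∀ (g : ℝ → ℝ) (t : ℝ), (fun x => g (x + -t)) = fun u => g (u - t) := by
    intro g t
    funext x
    rw [show x + -t = x - t from by ring]
  have hgm₁ : AEStronglyMeasurable (fun u => h₁ (u - t₁)) μπ := by
    rw [← hshift_eq h₁ t₁]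
    exact aesm_shift h₁ hper₁ m₁ (-t₁) (by rw [abs_neg]; linarith)
  have hgm₂ : AEStronglyMeasurable (fun u => h₂ (u - t₂)) μπ := by
    rw [← hshift_eq h₂ t₂]
    exact aesm_shift h₂ hper₂ m₂ (-t₂) (by rw [abs_neg]; linarith)
  have hgm₃ : AEStronglyMeasurable (fun u => h₃ (u - t₃)) μπ := by
    rw [← hshift_eq h₃ t₃]
    exact aesm_shift h₃ hper₃ m₃ (-t₃) (by rw [abs_neg]; linarith)
  -- norms of shifted functions
  have hgn₁ : eLpNorm (fun u => h₁ (u - t₁)) p₁ μπ ≤ 3 * N₁ := by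
    rw [← hshift_eq h₁ t₁]
    exact eLpNorm_shift_le h₁ hper₁ hp₁ (-t₁) (by rw [abs_neg]; linarith)
  have hgn₂ : eLpNorm (fun u => h₂ (u - t₂)) p₂ μπ ≤ 3 * N₂ := by
    rw [← hshift_eq h₂ t₂]
    exact eLpNorm_shift_le h₂ hper₂ hp₂ (-t₂) (by rw [abs_neg]; linarith)
  have hgn₃ : eLpNorm (fun u => h₃ (u - t₃)) p₃ μπ ≤ 3 * N₃ := by
    rw [← hshift_eq h₃ t₃]
    exact eLpNorm_shift_le h₃ hper₃ hp₃ (-t₃) (by rw [abs_neg]; linarith)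
  -- difference bounds
  have hd₁ : eLpNorm (fun u => h₁ (u - t₁) - h₁ u) p₁ μπ
      ≤ 3 * (ENNReal.ofReal Cm * ENNReal.ofReal (|t₁| ^ γ)) := by
    refine (diff_bound hp₁ h₁ hper₁ m₁ hCc₁ ha₁).trans (mul_le_mul_right ?_ 3)
    rw [← ENNReal.ofReal_mul hCm0]
    refine ENNReal.ofReal_le_ofReal (mul_le_mul_of_nonneg_right ?_ (rpow_nonneg (abs_nonneg _) γ))
    exact le_max_of_le_right (le_max_left _ _)
  have hd₂ : eLpNorm (fun u => h₂ (u - t₂) - h₂ u) p₂ μπ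
      ≤ 3 * (ENNReal.ofReal Cm * ENNReal.ofReal (|t₂| ^ γ)) := by
    refine (diff_bound hp₂ h₂ hper₂ m₂ hCc₂ ha₂).trans (mul_le_mul_right ?_ 3)
    rw [← ENNReal.ofReal_mul hCm0]
    refine ENNReal.ofReal_le_ofReal (mul_le_mul_of_nonneg_right ?_ (rpow_nonneg (abs_nonneg _) γ))
    exact le_max_of_le_right (le_max_of_le_right (le_max_left _ _))
  have hd₃ : eLpNorm (fun u => h₃ (u - t₃) - h₃ u) p₃ μπ
      ≤ 3 * (ENNReal.ofReal Cm * ENNReal.ofReal (|t₃| ^ γ)) := by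
    refine (diff_bound hp₃ h₃ hper₃ m₃ hCc₃ ha₃).trans (mul_le_mul_right ?_ 3)
    rw [← ENNReal.ofReal_mul hCm0]
    refine ENNReal.ofReal_le_ofReal (mul_le_mul_of_nonneg_right ?_ (rpow_nonneg (abs_nonneg _) γ))
    exact le_max_of_le_right (le_max_of_le_right (le_max_right _ _))
  -- the three telescoping terms
  have hone : (1 : ℝ≥0∞) ≤ N₁ + 1 := le_add_self
  have hX₁ : eLpNorm (fun u => h₀ u * (h₁ (u - t₁) - h₁ u) * h₂ (u - t₂) * h₃ (u - t₃)) 1 μπ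
      ≤ M * ENNReal.ofReal (|t₁| ^ γ) := by
    refine (holder4 hsum h₀ _ _ _ m₀ (hgm₁.sub m₁) hgm₂ hgm₃).trans ?_
    calc K * (N₀ * eLpNorm (fun u => h₁ (u - t₁) - h₁ u) p₁ μπ *
            eLpNorm (fun u => h₂ (u - t₂)) p₂ μπ * eLpNorm (fun u => h₃ (u - t₃)) p₃ μπ)
        ≤ K * ((N₀ + 1) * (3 * (ENNReal.ofReal Cm * ENNReal.ofReal (|t₁| ^ γ))) *
            (3 * (N₂ + 1)) * (3 * (N₃ + 1))) :=
          mul_le_mul_right (mul_le_mul' (mul_le_mul' (mul_le_mul' le_self_add hd₁)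
            (hgn₂.trans (mul_le_mul_right le_self_add 3)))
            (hgn₃.trans (mul_le_mul_right le_self_add 3))) K
      _ = (K * (27 * ENNReal.ofReal Cm *
            ((N₀ + 1) * (1 * ((N₂ + 1) * (N₃ + 1)))))) * ENNReal.ofReal (|t₁| ^ γ) := by
          ring
      _ ≤ M * ENNReal.ofReal (|t₁| ^ γ) := by
          rw [hMdef]
          exact mul_le_mul_left (mul_le_mul_right (mul_le_mul_right
            (mul_le_mul_right (mul_le_mul_left hone ((N₂ + 1) * (N₃ + 1))) (N₀ + 1))
            (27 * ENNReal.ofReal Cm)) K) (ENNReal.ofReal (|t₁| ^ γ))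
  have hX₂ : eLpNorm (fun u => h₀ u * h₁ u * (h₂ (u - t₂) - h₂ u) * h₃ (u - t₃)) 1 μπ
      ≤ M * ENNReal.ofReal (|t₂| ^ γ) := by
    refine (holder4 hsum h₀ _ _ _ m₀ m₁ (hgm₂.sub m₂) hgm₃).trans ?_
    calc K * (N₀ * N₁ * eLpNorm (fun u => h₂ (u - t₂) - h₂ u) p₂ μπ *
            eLpNorm (fun u => h₃ (u - t₃)) p₃ μπ)
        ≤ K * ((N₀ + 1) * (N₁ + 1) *
            (3 * (ENNReal.ofReal Cm * ENNReal.ofReal (|t₂| ^ γ))) * (3 * (N₃ + 1))) :=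
          mul_le_mul_right (mul_le_mul' (mul_le_mul' (mul_le_mul' le_self_add le_self_add)
            hd₂) (hgn₃.trans (mul_le_mul_right le_self_add 3))) K
      _ = (K * (9 * ENNReal.ofReal Cm *
            ((N₀ + 1) * ((N₁ + 1) * (1 * (N₃ + 1)))))) * ENNReal.ofReal (|t₂| ^ γ) := by
          ring
      _ ≤ M * ENNReal.ofReal (|t₂| ^ γ) := by
          rw [hMdef]
          refine mul_le_mul_left (mul_le_mul_right (mul_le_mul'
            (mul_le_mul_left (by norm_num : (9 : ℝ≥0∞) ≤ 27) (ENNReal.ofReal Cm))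
            (mul_le_mul_right (mul_le_mul_right
              (mul_le_mul_left le_add_self (N₃ + 1)) (N₁ + 1)) (N₀ + 1))) K) _
  have hX₃ : eLpNorm (fun u => h₀ u * h₁ u * h₂ u * (h₃ (u - t₃) - h₃ u)) 1 μπ
      ≤ M * ENNReal.ofReal (|t₃| ^ γ) := by
    refine (holder4 hsum h₀ _ _ _ m₀ m₁ m₂ (hgm₃.sub m₃)).trans ?_
    calc K * (N₀ * N₁ * N₂ *
            eLpNorm (fun u => h₃ (u - t₃) - h₃ u) p₃ μπ)
        ≤ K * ((N₀ + 1) * (N₁ + 1) * (N₂ + 1) *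
            (3 * (ENNReal.ofReal Cm * ENNReal.ofReal (|t₃| ^ γ)))) :=
          mul_le_mul_right (mul_le_mul' (mul_le_mul' (mul_le_mul' le_self_add le_self_add)
            le_self_add) hd₃) K
      _ = (K * (3 * ENNReal.ofReal Cm *
            ((N₀ + 1) * ((N₁ + 1) * ((N₂ + 1) * 1))))) * ENNReal.ofReal (|t₃| ^ γ) := by
          ring
      _ ≤ M * ENNReal.ofReal (|t₃| ^ γ) := by
          rw [hMdef]
          refine mul_le_mul_left (mul_le_mul_right (mul_le_mul'
            (mul_le_mul_left (by norm_num : (3 : ℝ≥0∞) ≤ 27) (ENNReal.ofReal Cm))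
            (mul_le_mul_right (mul_le_mul_right
              (mul_le_mul_right le_add_self (N₂ + 1)) (N₁ + 1)) (N₀ + 1))) K) _
  -- integrability
  have hIt : Integrable (fun u => h₀ u * h₁ (u - t₁) * h₂ (u - t₂) * h₃ (u - t₃)) μπ := by
    rw [← memLp_one_iff_integrable]
    refine ⟨((m₀.mul hgm₁).mul hgm₂).mul hgm₃, ?_⟩
    refine ((holder4 hsum h₀ _ _ _ m₀ hgm₁ hgm₂ hgm₃).trans_lt ?_)
    refine ENNReal.mul_lt_top hKne.lt_top ?_
    refine ENNReal.mul_lt_top (ENNReal.mul_lt_top (ENNReal.mul_lt_top hN₀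
      (hgn₁.trans_lt (ENNReal.mul_lt_top (by norm_num) hN₁))) ?_) ?_
    · exact hgn₂.trans_lt (ENNReal.mul_lt_top (by norm_num) hN₂)
    · exact hgn₃.trans_lt (ENNReal.mul_lt_top (by norm_num) hN₃)
  have hI0 : Integrable (fun u => h₀ u * h₁ u * h₂ u * h₃ u) μπ := by
    rw [← memLp_one_iff_integrable]
    refine ⟨((m₀.mul m₁).mul m₂).mul m₃, ?_⟩
    refine ((holder4 hsum h₀ _ _ _ m₀ m₁ m₂ m₃).trans_lt ?_)
    exact ENNReal.mul_lt_top hKne.lt_top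
      (ENNReal.mul_lt_top (ENNReal.mul_lt_top (ENNReal.mul_lt_top hN₀ hN₁) hN₂) hN₃)
  have aX₁ : AEStronglyMeasurable
      (fun u => h₀ u * (h₁ (u - t₁) - h₁ u) * h₂ (u - t₂) * h₃ (u - t₃)) μπ :=
    ((m₀.mul (hgm₁.sub m₁)).mul hgm₂).mul hgm₃
  have aX₂ : AEStronglyMeasurable
      (fun u => h₀ u * h₁ u * (h₂ (u - t₂) - h₂ u) * h₃ (u - t₃)) μπ :=
    ((m₀.mul m₁).mul (hgm₂.sub m₂)).mul hgm₃
  have aX₃ : AEStronglyMeasurable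
      (fun u => h₀ u * h₁ u * h₂ u * (h₃ (u - t₃) - h₃ u)) μπ :=
    ((m₀.mul m₁).mul m₂).mul (hgm₃.sub m₃)
  have hofne : ∀ x : ℝ, M * ENNReal.ofReal x ≠ ∞ :=
    fun x => ENNReal.mul_ne_top hMne ENNReal.ofReal_ne_top
  have hX₁i : Integrable (fun u => h₀ u * (h₁ (u - t₁) - h₁ u) * h₂ (u - t₂) * h₃ (u - t₃)) μπ :=
    memLp_one_iff_integrable.mp ⟨aX₁, hX₁.trans_lt (hofne _).lt_top⟩
  have hX₂i : Integrable (fun u => h₀ u * h₁ u * (h₂ (u - t₂) - h₂ u) * h₃ (u - t₃)) μπ :=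
    memLp_one_iff_integrable.mp ⟨aX₂, hX₂.trans_lt (hofne _).lt_top⟩
  have hX₃i : Integrable (fun u => h₀ u * h₁ u * h₂ u * (h₃ (u - t₃) - h₃ u)) μπ :=
    memLp_one_iff_integrable.mp ⟨aX₃, hX₃.trans_lt (hofne _).lt_top⟩
  -- telescoping identity
  have e0 : ∫ u, (h₀ u * h₁ (u - t₁) * h₂ (u - t₂) * h₃ (u - t₃)
        - h₀ u * h₁ u * h₂ u * h₃ u) ∂μπ
      = (∫ u, h₀ u * h₁ (u - t₁) * h₂ (u - t₂) * h₃ (u - t₃) ∂μπ)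
        - ∫ u, h₀ u * h₁ u * h₂ u * h₃ u ∂μπ := integral_sub hIt hI0
  have e12 : ∫ u, (h₀ u * (h₁ (u - t₁) - h₁ u) * h₂ (u - t₂) * h₃ (u - t₃)
        + h₀ u * h₁ u * (h₂ (u - t₂) - h₂ u) * h₃ (u - t₃)) ∂μπ
      = (∫ u, h₀ u * (h₁ (u - t₁) - h₁ u) * h₂ (u - t₂) * h₃ (u - t₃) ∂μπ)
        + ∫ u, h₀ u * h₁ u * (h₂ (u - t₂) - h₂ u) * h₃ (u - t₃) ∂μπ :=
    integral_add hX₁i hX₂i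
  have e123 : ∫ u, ((h₀ u * (h₁ (u - t₁) - h₁ u) * h₂ (u - t₂) * h₃ (u - t₃)
        + h₀ u * h₁ u * (h₂ (u - t₂) - h₂ u) * h₃ (u - t₃))
        + h₀ u * h₁ u * h₂ u * (h₃ (u - t₃) - h₃ u)) ∂μπ
      = (∫ u, (h₀ u * (h₁ (u - t₁) - h₁ u) * h₂ (u - t₂) * h₃ (u - t₃)
          + h₀ u * h₁ u * (h₂ (u - t₂) - h₂ u) * h₃ (u - t₃)) ∂μπ)
        + ∫ u, h₀ u * h₁ u * h₂ u * (h₃ (u - t₃) - h₃ u) ∂μπ :=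
    integral_add (hX₁i.add hX₂i) hX₃i
  have hsplit : (∫ u, h₀ u * h₁ (u - t₁) * h₂ (u - t₂) * h₃ (u - t₃) ∂μπ) -
      (∫ u, h₀ u * h₁ u * h₂ u * h₃ u ∂μπ) =
      (∫ u, h₀ u * (h₁ (u - t₁) - h₁ u) * h₂ (u - t₂) * h₃ (u - t₃) ∂μπ) +
      (∫ u, h₀ u * h₁ u * (h₂ (u - t₂) - h₂ u) * h₃ (u - t₃) ∂μπ) +
      (∫ u, h₀ u * h₁ u * h₂ u * (h₃ (u - t₃) - h₃ u) ∂μπ) := by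
    rw [← e0, ← e12, ← e123]
    refine integral_congr_ae (Filter.Eventually.of_forall fun u => ?_)
    ring
  -- bounding each integral
  have habs : ∀ (f : ℝ → ℝ), AEStronglyMeasurable f μπ →
      ∀ (B : ℝ), 0 ≤ B → eLpNorm f 1 μπ ≤ M * ENNReal.ofReal B →
      |∫ u, f u ∂μπ| ≤ M.toReal * B := by
    intro f hf B hB0 hB
    have h1 : |∫ u, f u ∂μπ| ≤ ∫ u, |f u| ∂μπ := by
      simpa [Real.norm_eq_abs] using norm_integral_le_integral_norm (μ := μπ) f
    have h2 : ∫ u, |f u| ∂μπ = (eLpNorm f 1 μπ).toReal := by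
      rw [eLpNorm_one_eq_lintegral_enorm, ← integral_norm_eq_lintegral_enorm hf]
      simp only [Real.norm_eq_abs]
    have h3 : (eLpNorm f 1 μπ).toReal ≤ (M * ENNReal.ofReal B).toReal :=
      ENNReal.toReal_mono (hofne B) hB
    rw [ENNReal.toReal_mul, ENNReal.toReal_ofReal hB0] at h3
    exact (h1.trans_eq h2).trans h3
  have hb₁ := habs _ aX₁ _ (rpow_nonneg (abs_nonneg t₁) γ) hX₁
  have hb₂ := habs _ aX₂ _ (rpow_nonneg (abs_nonneg t₂) γ) hX₂
  have hb₃ := habs _ aX₃ _ (rpow_nonneg (abs_nonneg t₃) γ) hX₃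
  rw [intervalIntegral.integral_of_le (by linarith : -π ≤ π),
    intervalIntegral.integral_of_le (by linarith : -π ≤ π), hsplit]
  have hS0 : 0 ≤ |t₁| + |t₂| + |t₃| := by positivity
  have hSγ0 : 0 ≤ (|t₁| + |t₂| + |t₃|) ^ γ := rpow_nonneg hS0 γ
  have hS₁ : |t₁| ^ γ ≤ (|t₁| + |t₂| + |t₃|) ^ γ :=
    Real.rpow_le_rpow (abs_nonneg _) (by linarith [abs_nonneg t₂, abs_nonneg t₃]) hγpos.le
  have hS₂ : |t₂| ^ γ ≤ (|t₁| + |t₂| + |t₃|) ^ γ :=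
    Real.rpow_le_rpow (abs_nonneg _) (by linarith [abs_nonneg t₁, abs_nonneg t₃]) hγpos.le
  have hS₃ : |t₃| ^ γ ≤ (|t₁| + |t₂| + |t₃|) ^ γ :=
    Real.rpow_le_rpow (abs_nonneg _) (by linarith [abs_nonneg t₁, abs_nonneg t₂]) hγpos.le
  have hM0 : 0 ≤ M.toReal := ENNReal.toReal_nonneg
  calc |(∫ u, h₀ u * (h₁ (u - t₁) - h₁ u) * h₂ (u - t₂) * h₃ (u - t₃) ∂μπ) +
      (∫ u, h₀ u * h₁ u * (h₂ (u - t₂) - h₂ u) * h₃ (u - t₃) ∂μπ) +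
      (∫ u, h₀ u * h₁ u * h₂ u * (h₃ (u - t₃) - h₃ u) ∂μπ)|
      ≤ |∫ u, h₀ u * (h₁ (u - t₁) - h₁ u) * h₂ (u - t₂) * h₃ (u - t₃) ∂μπ| +
        |∫ u, h₀ u * h₁ u * (h₂ (u - t₂) - h₂ u) * h₃ (u - t₃) ∂μπ| +
        |∫ u, h₀ u * h₁ u * h₂ u * (h₃ (u - t₃) - h₃ u) ∂μπ| := abs_add_three _ _ _
    _ ≤ M.toReal * |t₁| ^ γ + M.toReal * |t₂| ^ γ + M.toReal * |t₃| ^ γ :=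
        add_le_add (add_le_add hb₁ hb₂) hb₃
    _ ≤ (3 * M.toReal + 1) * (|t₁| + |t₂| + |t₃|) ^ γ := by
        have g1 := mul_le_mul_of_nonneg_left hS₁ hM0
        have g2 := mul_le_mul_of_nonneg_left hS₂ hM0
        have g3 := mul_le_mul_of_nonneg_left hS₃ hM0
        nlinarith [hSγ0]

end PhiLipschitzAux
end
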